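/- arXiv:2209.12765 — 8 statements merged into one kernel-verified Lean document; each statement's English description precedes it below -/
import Mathlib

section
/- Let h: ℝ → ℝ be a differentiable function and set γ(ψ) = h(ψ)(cos ψ, sin ψ) + h'(ψ)(−sin ψ, cos ψ). Define S(φ₁,φ₂) = 2 h((φ₁+φ₂)/2) sin((φ₂−φ₁)/2). Then for all φ₁, φ₂, writing ψ = (φ₁+φ₂)/2, one has −∂S/∂φ₁ (φ₁,φ₂) = ⟨γ(ψ), (cos φ₁, sin φ₁)⟩ and ∂S/∂φ₂ (φ₁,φ₂) = ⟨γ(ψ), (cos φ₂, sin φ₂)⟩. (Thus S is a generating function of the billiard map in the (p,φ) coordinates on the space of oriented lines: −∂₁S = p₁, ∂₂S = p₂.) -/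
open Real

noncomputable section

/-- the non-standard generating function `S(φ₁,φ₂) = 2h((φ₁+φ₂)/2) sin((φ₂−φ₁)/2)`
is a generating function of the billiard map: `−∂S/∂φ₁ = p₁` and `∂S/∂φ₂ = p₂`, where
`p_i = ⟨γ(ψ), (cos φ_i, sin φ_i)⟩` and `γ(ψ) = h(ψ)(cos ψ, sin ψ) + h'(ψ)(−sin ψ, cos ψ)`. -/
theorem nonstandard_generating_function
    (h : ℝ → ℝ) (hdiff : Differentiable ℝ h)
    (γ : ℝ → ℝ × ℝ)
    (hγ : ∀ ψ : ℝ, γ ψ = (h ψ * Real.cos ψ + deriv h ψ * (-Real.sin ψ),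
                          h ψ * Real.sin ψ + deriv h ψ * Real.cos ψ))
    (S : ℝ → ℝ → ℝ)
    (hS : ∀ φ₁ φ₂ : ℝ, S φ₁ φ₂ = 2 * h ((φ₁ + φ₂) / 2) * Real.sin ((φ₂ - φ₁) / 2)) :
    ∀ φ₁ φ₂ : ℝ,
      (-(deriv (fun s => S s φ₂) φ₁) =
        (γ ((φ₁ + φ₂) / 2)).1 * Real.cos φ₁ + (γ ((φ₁ + φ₂) / 2)).2 * Real.sin φ₁) ∧
      (deriv (fun s => S φ₁ s) φ₂ =
        (γ ((φ₁ + φ₂) / 2)).1 * Real.cos φ₂ + (γ ((φ₁ + φ₂) / 2)).2 * Real.sin φ₂) := by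
  intro φ₁ φ₂
  set ψ : ℝ := (φ₁ + φ₂) / 2 with hψ
  have hγψ := hγ ψ
  -- derivative in first variable
  have ha1 : HasDerivAt (fun s : ℝ => (s + φ₂) / 2) (1 / 2) φ₁ := by
    simpa using ((hasDerivAt_id φ₁).add_const φ₂).div_const 2
  have hh1 : HasDerivAt (fun s : ℝ => h ((s + φ₂) / 2)) (deriv h ψ * (1 / 2)) φ₁ :=
    ((hdiff ψ).hasDerivAt).comp φ₁ ha1
  have hb1 : HasDerivAt (fun s : ℝ => (φ₂ - s) / 2) (-1 / 2) φ₁ := by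
    simpa using ((hasDerivAt_id φ₁).const_sub φ₂).div_const 2
  have hs1 : HasDerivAt (fun s : ℝ => Real.sin ((φ₂ - s) / 2))
      (Real.cos ((φ₂ - φ₁) / 2) * (-1 / 2)) φ₁ :=
    hb1.sin
  have H1 : HasDerivAt (fun s => S s φ₂)
      ((2 * (deriv h ψ * (1 / 2))) * Real.sin ((φ₂ - φ₁) / 2)
        + (2 * h ψ) * (Real.cos ((φ₂ - φ₁) / 2) * (-1 / 2))) φ₁ := by
    have := (hh1.const_mul 2).mul hs1
    simp only [hS]
    exact this
  -- derivative in second variable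
  have ha2 : HasDerivAt (fun s : ℝ => (φ₁ + s) / 2) (1 / 2) φ₂ := by
    simpa using ((hasDerivAt_id φ₂).const_add φ₁).div_const 2
  have hh2 : HasDerivAt (fun s : ℝ => h ((φ₁ + s) / 2)) (deriv h ψ * (1 / 2)) φ₂ :=
    ((hdiff ψ).hasDerivAt).comp φ₂ ha2
  have hb2 : HasDerivAt (fun s : ℝ => (s - φ₁) / 2) (1 / 2) φ₂ := by
    simpa using ((hasDerivAt_id φ₂).sub_const φ₁).div_const 2
  have hs2 : HasDerivAt (fun s : ℝ => Real.sin ((s - φ₁) / 2))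
      (Real.cos ((φ₂ - φ₁) / 2) * (1 / 2)) φ₂ :=
    hb2.sin
  have H2 : HasDerivAt (fun s => S φ₁ s)
      ((2 * (deriv h ψ * (1 / 2))) * Real.sin ((φ₂ - φ₁) / 2)
        + (2 * h ψ) * (Real.cos ((φ₂ - φ₁) / 2) * (1 / 2))) φ₂ := by
    have := (hh2.const_mul 2).mul hs2
    simp only [hS]
    exact this
  have e1 : (φ₂ - φ₁) / 2 = ψ - φ₁ := by rw [hψ]; ring
  have e2 : (φ₂ - φ₁) / 2 = φ₂ - ψ := by rw [hψ]; ring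
  constructor
  · rw [H1.deriv, hγψ]
    simp only
    rw [e1, Real.cos_sub, Real.sin_sub]
    ring
  · rw [H2.deriv, hγψ]
    simp only
    rw [e2, Real.cos_sub, Real.sin_sub]
    ring
end
end

section
/- Let a > b > 0 and 0 < λ < b². Suppose x = (x₁,x₂) lies on the ellipse E and v = (v₁,v₂) is a unit vector such that the line through x with direction v is tangent to the confocal ellipse E_λ. Then (x₁v₁/a² + x₂v₂/b²)² = λ/(a²b²). (Equivalently, the Joachimsthal quantity J = sin δ / h satisfies J = √λ/(ab).) -/
open Real

noncomputable section

/-- if `x ∈ E` and `v` is a unit vector such that the line through `x`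
with direction `v` is tangent to the confocal ellipse `E_λ`, then the Joachimsthal
quantity satisfies `(x₁v₁/a² + x₂v₂/b²)² = λ/(a²b²)`. -/
theorem joachimsthal_value
    (a b lam : ℝ) (hab : b < a) (hb : 0 < b) (hlam0 : 0 < lam) (hlam : lam < b^2)
    (x v : ℝ × ℝ)
    (hx : x.1^2 / a^2 + x.2^2 / b^2 = 1)
    (hv : v.1^2 + v.2^2 = 1)
    (htan : ∃! z : ℝ × ℝ, (∃ t : ℝ, z = (x.1 + t * v.1, x.2 + t * v.2)) ∧
        z.1^2 / (a^2 - lam) + z.2^2 / (b^2 - lam) = 1) :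
    (x.1 * v.1 / a^2 + x.2 * v.2 / b^2)^2 = lam / (a^2 * b^2) := by
  have ha : (0:ℝ) < a := hb.trans hab
  have hp : (0:ℝ) < a^2 - lam := by nlinarith
  have hq : (0:ℝ) < b^2 - lam := by nlinarith
  set p : ℝ := a^2 - lam with hpdef
  set q : ℝ := b^2 - lam with hqdef
  set A : ℝ := v.1^2 * q + v.2^2 * p with hAdef
  set B : ℝ := x.1 * v.1 * q + x.2 * v.2 * p with hBdef
  set C : ℝ := x.1^2 * q + x.2^2 * p - p * q with hCdef
  have hpq : p * q ≠ 0 := (mul_pos hp hq).ne'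
  have hg : ∀ t : ℝ, (x.1 + t * v.1)^2 / p + (x.2 + t * v.2)^2 / q - 1
      = (A * t^2 + 2 * B * t + C) / (p * q) := by
    intro t
    field_simp
    ring
  have hg' : ∀ t : ℝ, ((x.1 + t * v.1)^2 / p + (x.2 + t * v.2)^2 / q = 1)
      ↔ A * t^2 + 2 * B * t + C = 0 := by
    intro t
    constructor
    · intro h
      have h2 := hg t
      rw [h] at h2
      have : (A * t^2 + 2 * B * t + C) / (p * q) = 0 := by linarith
      exact (div_eq_zero_iff.mp this).resolve_right hpq
    · intro h
      have h2 := hg t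
      rw [h, zero_div] at h2
      linarith
  obtain ⟨z, ⟨⟨t0, rfl⟩, hz2⟩, hu⟩ := htan
  have ht0 : A * t0^2 + 2 * B * t0 + C = 0 := (hg' t0).mp hz2
  -- uniqueness of roots in t
  have hvne : v.1 ≠ 0 ∨ v.2 ≠ 0 := by
    by_contra h
    push_neg at h
    rw [h.1, h.2] at hv
    norm_num at hv
  have ht : ∀ t : ℝ, A * t^2 + 2 * B * t + C = 0 → t = t0 := by
    intro t htg
    have hft := (hg' t).mpr htg
    have heq := hu (x.1 + t * v.1, x.2 + t * v.2) ⟨⟨t, rfl⟩, hft⟩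
    have h1 : x.1 + t * v.1 = x.1 + t0 * v.1 := congrArg Prod.fst heq
    have h2 : x.2 + t * v.2 = x.2 + t0 * v.2 := congrArg Prod.snd heq
    rcases hvne with hv1 | hv2
    · have : t * v.1 = t0 * v.1 := by linarith
      exact mul_right_cancel₀ hv1 this
    · have : t * v.2 = t0 * v.2 := by linarith
      exact mul_right_cancel₀ hv2 this
  have hA : 0 < A := by
    rcases le_total p q with h | h
    · nlinarith [sq_nonneg v.1, sq_nonneg v.2]
    · nlinarith [sq_nonneg v.1, sq_nonneg v.2]
  set t1 : ℝ := -(2*B)/A - t0 with ht1def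
  have hsum : A * (t1 + t0) + 2 * B = 0 := by
    rw [ht1def]
    field_simp
    ring
  have gt1 : A * t1^2 + 2 * B * t1 + C = 0 := by
    linear_combination ht0 + (t1 - t0) * hsum
  have teq : t1 = t0 := ht t1 gt1
  have hAt0 : A * t0 + B = 0 := by
    rw [teq] at hsum
    linarith
  have disc : B^2 = A * C := by
    linear_combination (-A) * ht0 + (A * t0 + B) * hAt0
  have h2 : p * q * ((x.1 * v.2 - x.2 * v.1)^2)
      = p * q * (v.1^2 * q + v.2^2 * p) := by
    linear_combination (-1 : ℝ) * disc
  have hkey : (x.1 * v.2 - x.2 * v.1)^2 = v.1^2 * q + v.2^2 * p :=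
    mul_left_cancel₀ hpq h2
  have hxc : x.1^2 * b^2 + x.2^2 * a^2 = a^2 * b^2 := by
    field_simp at hx
    linarith
  rw [hpdef, hqdef] at hkey
  have ha2 : (a:ℝ)^2 ≠ 0 := by positivity
  have hb2 : (b:ℝ)^2 ≠ 0 := by positivity
  field_simp
  linear_combination ((v.1^2 * b^2 + v.2^2 * a^2) * hxc - (a^2 * b^2) * hkey +
    lam * a^2 * b^2 * hv)
end
end

section
/- Let a > b > 0 and let x, x' be distinct points on the ellipse E = {x²/a² + y²/b² = 1}. Let v = (x'−x)/‖x'−x‖ be the unit direction of the chord, let N = (x'₁/a², x'₂/b²) be the normal vector to E at x', n = N/‖N‖, and let v' = v − 2⟨v,n⟩n be the billiard reflection of v at x'. Then x₁v₁/a² + x₂v₂/b² = x'₁v'₁/a² + x'₂v'₂/b², i.e. the Joachimsthal quantity ⟨Qx, v⟩ with Q = diag(1/a², 1/b²) is invariant under the billiard reflection in E. -/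
open Real
open scoped RealInnerProductSpace

noncomputable section

abbrev Pt := EuclideanSpace ℝ (Fin 2)

/-- the Joachimsthal quantity `⟨Qx, v⟩`, `Q = diag(1/a², 1/b²)`, is invariant
under billiard reflection in the ellipse `E = {x²/a² + y²/b² = 1}`: if `x, x' ∈ E` are
distinct, `v` is the unit direction of the chord from `x` to `x'`, `n` the unit normal at
`x'`, and `v' = v − 2⟨v,n⟩n`, then `x₁v₁/a² + x₂v₂/b² = x'₁v'₁/a² + x'₂v'₂/b²`. -/
theorem joachimsthal_invariance
    (a b : ℝ) (hab : b < a) (hb : 0 < b)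
    (x x' : Pt)
    (hx : (x 0)^2 / a^2 + (x 1)^2 / b^2 = 1)
    (hx' : (x' 0)^2 / a^2 + (x' 1)^2 / b^2 = 1)
    (hne : x ≠ x')
    (v N n v' : Pt)
    (hv : v = ‖x' - x‖⁻¹ • (x' - x))
    (hN : N = (WithLp.toLp 2 ![x' 0 / a^2, x' 1 / b^2] : Pt))
    (hn : n = ‖N‖⁻¹ • N)
    (hv' : v' = v - (2 * ⟪v, n⟫) • n) :
    x 0 * v 0 / a^2 + x 1 * v 1 / b^2 = x' 0 * v' 0 / a^2 + x' 1 * v' 1 / b^2 := by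
  have ha : (0:ℝ) < a := hb.trans hab
  have ha' : a ≠ 0 := ha.ne'
  have hb' : b ≠ 0 := hb.ne'
  have hN0 : N 0 = x' 0 / a^2 := by rw [hN]; rfl
  have hN1 : N 1 = x' 1 / b^2 := by rw [hN]; rfl
  have hNne : N ≠ 0 := by
    intro h
    have h0 : x' 0 / a^2 = 0 := by rw [← hN0, h]; rfl
    have h1 : x' 1 / b^2 = 0 := by rw [← hN1, h]; rfl
    have hx0 : x' 0 = 0 := by field_simp at h0; simpa using h0
    have hx1 : x' 1 = 0 := by field_simp at h1; simpa using h1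
    rw [hx0, hx1] at hx'
    norm_num at hx'
  have hNnorm : ‖N‖ ≠ 0 := norm_ne_zero_iff.mpr hNne
  have h1 : (x' 0 / a^2)^2 + (x' 1 / b^2)^2 = ‖N‖^2 := by
    rw [← real_inner_self_eq_norm_sq, hN]
    simp only [PiLp.inner_apply, Fin.sum_univ_two, RCLike.inner_apply, conj_trivial,
      PiLp.toLp_apply, Matrix.cons_val_zero, Matrix.cons_val_one]
    ring
  set s := ‖N‖⁻¹ with hs
  have key : s^2 * ((x' 0 / a^2)^2 + (x' 1 / b^2)^2) = 1 := by
    rw [h1, hs]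
    field_simp
  set r := ‖x' - x‖⁻¹ with hr
  have hv0 : v 0 = r * (x' 0 - x 0) := by rw [hv]; simp
  have hv1 : v 1 = r * (x' 1 - x 1) := by rw [hv]; simp
  have hn0 : n 0 = s * (x' 0 / a^2) := by rw [hn, hN]; simp
  have hn1 : n 1 = s * (x' 1 / b^2) := by rw [hn, hN]; simp
  have hinner : ⟪v, n⟫ = v 0 * n 0 + v 1 * n 1 := by
    simp [PiLp.inner_apply, Fin.sum_univ_two]
    ring
  have hv'0 : v' 0 = v 0 - (2 * (v 0 * n 0 + v 1 * n 1)) * n 0 := by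
    rw [hv', ← hinner]; simp
  have hv'1 : v' 1 = v 1 - (2 * (v 0 * n 0 + v 1 * n 1)) * n 1 := by
    rw [hv', ← hinner]; simp
  rw [hv'0, hv'1, hv0, hv1, hn0, hn1]
  linear_combination r * hx' - r * hx +
    2 * r * ((x' 0 - x 0) * (x' 0 / a^2) + (x' 1 - x 1) * (x' 1 / b^2)) * key
end
end

section
/- Let a > b > 0, 0 < λ < b², c = √(a²−b²), f = √(a²−λ)/c, J = √λ/(ab), and d = (1 − J²a²)/(J²c²). Then for every ψ ∈ [0, π/2]: ∫₀^ψ dt / (√(a² − c² sin²t) · √(1 − J²a² + J²c² sin²t)) = (1/(c f)) · F(φ, 1/f), where φ = arcsin √( (d+1) sin²ψ / (sin²ψ + d) ). (This is the invariant measure μ([0,ψ]) of the arc [0,ψ] on the invariant curve of the elliptic billiard corresponding to the caustic E_λ.) -/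
open Real intervalIntegral

noncomputable section

/-- Incomplete elliptic integral of the first kind. -/
def ellF (φ k : ℝ) : ℝ := ∫ t in (0:ℝ)..φ, 1 / Real.sqrt (1 - k^2 * Real.sin t ^ 2)

/-- auxiliary: sine of the substitution angle -/
def Wfun (d t : ℝ) : ℝ := Real.sqrt (d+1) * Real.sin t / Real.sqrt (Real.sin t ^ 2 + d)

/-- auxiliary: the substitution angle -/
def Phifun (d t : ℝ) : ℝ := Real.arcsin (Wfun d t)

/-- auxiliary: derivative of the substitution angle -/
def Efun (d t : ℝ) : ℝ := Real.sqrt (d*(d+1)) / (Real.sin t ^ 2 + d)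

lemma eq_of_sq_eq_sq {x y : ℝ} (hx : 0 ≤ x) (hy : 0 ≤ y) (h : x^2 = y^2) : x = y := by
  have h' : (x - y) * (x + y) = 0 := by ring_nf; linarith
  rcases mul_eq_zero.mp h' with h1 | h1
  · linarith
  · have hx0 : x = 0 := by linarith
    have hy0 : y = 0 := by linarith
    rw [hx0, hy0]

lemma Wfun_sq {d : ℝ} (hd : 0 < d) (t : ℝ) :
    (Wfun d t)^2 = (d+1) * Real.sin t ^ 2 / (Real.sin t ^ 2 + d) := by
  have hsd : 0 < Real.sin t ^ 2 + d := by positivity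
  simp only [Wfun, div_pow, mul_pow]
  rw [Real.sq_sqrt (by linarith), Real.sq_sqrt hsd.le]

lemma Wfun_sq_le_one {d : ℝ} (hd : 0 < d) (t : ℝ) : (Wfun d t)^2 ≤ 1 := by
  have hsd : 0 < Real.sin t ^ 2 + d := by positivity
  rw [Wfun_sq hd, div_le_one hsd]
  nlinarith [Real.sin_sq_le_one t]

lemma sin_Phifun_sq {d : ℝ} (hd : 0 < d) (t : ℝ) :
    Real.sin (Phifun d t) ^ 2 = (d+1) * Real.sin t ^ 2 / (Real.sin t ^ 2 + d) := by
  have h := Wfun_sq_le_one hd t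
  have habs := (sq_le_one_iff_abs_le_one (Wfun d t)).mp h
  rw [Phifun, Real.sin_arcsin (abs_le.mp habs).1 (abs_le.mp habs).2, Wfun_sq hd]

lemma Wfun_continuous {d : ℝ} (hd : 0 < d) : Continuous (Wfun d) := by
  apply Continuous.div (continuous_const.mul Real.continuous_sin)
    (Real.continuous_sqrt.comp ((Real.continuous_sin.pow 2).add continuous_const))
  intro t
  have : 0 < Real.sin t ^ 2 + d := by positivity
  exact (Real.sqrt_pos.mpr this).ne'

lemma Phifun_continuous {d : ℝ} (hd : 0 < d) : Continuous (Phifun d) :=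
  Real.continuous_arcsin.comp (Wfun_continuous hd)

lemma Efun_continuous {d : ℝ} (hd : 0 < d) : Continuous (Efun d) := by
  apply continuous_const.div ((Real.continuous_sin.pow 2).add continuous_const)
  intro t; have : 0 < Real.sin t ^ 2 + d := by positivity
  exact this.ne'

lemma Phifun_zero (d : ℝ) : Phifun d 0 = 0 := by
  simp [Phifun, Wfun]

lemma Phifun_hasDerivAt {d : ℝ} (hd : 0 < d) {x : ℝ} (hcx : 0 < Real.cos x) :
    HasDerivAt (Phifun d) (Efun d x) x := by
  have hs2 : Real.sin x ^ 2 < 1 := by nlinarith [Real.sin_sq_add_cos_sq x]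
  have hsd : 0 < Real.sin x ^ 2 + d := by positivity
  have hsdne : Real.sqrt (Real.sin x ^ 2 + d) ≠ 0 := (Real.sqrt_pos.mpr hsd).ne'
  have hm : HasDerivAt (fun t => Real.sqrt (Real.sin t ^ 2 + d))
      ((2 * Real.sin x ^ 1 * Real.cos x) / (2 * Real.sqrt (Real.sin x ^ 2 + d))) x := by
    have h1 : HasDerivAt (fun t => Real.sin t ^ 2 + d)
        ((2 : ℕ) * Real.sin x ^ (2-1) * Real.cos x) x :=
      (((Real.hasDerivAt_sin x).pow 2).add_const d)
    have h2 := h1.sqrt hsd.ne'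
    convert h2 using 1; norm_num
  have hn : HasDerivAt (fun t => Real.sqrt (d+1) * Real.sin t)
      (Real.sqrt (d+1) * Real.cos x) x := (Real.hasDerivAt_sin x).const_mul _
  have hw : HasDerivAt (Wfun d)
      ((Real.sqrt (d+1) * Real.cos x * Real.sqrt (Real.sin x ^ 2 + d) -
        Real.sqrt (d+1) * Real.sin x *
          ((2 * Real.sin x ^ 1 * Real.cos x) / (2 * Real.sqrt (Real.sin x ^ 2 + d)))) /
        (Real.sqrt (Real.sin x ^ 2 + d)) ^ 2) x := hn.div hm hsdne
  have hwlt : (Wfun d x)^2 < 1 := by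
    rw [Wfun_sq hd, div_lt_one hsd]; nlinarith
  have h1 : Wfun d x ≠ 1 := by intro hh; rw [hh] at hwlt; norm_num at hwlt
  have h2 : Wfun d x ≠ -1 := by intro hh; rw [hh] at hwlt; norm_num at hwlt
  have harc := Real.hasDerivAt_arcsin h2 h1
  have hcomp := harc.comp x hw
  rw [show Phifun d = arcsin ∘ Wfun d from rfl]; refine hcomp.congr_deriv ?_; symm
  simp only [Efun]
  have hw2 := Wfun_sq hd x
  have hcos2 : Real.cos x ^ 2 = 1 - Real.sin x ^ 2 := Real.cos_sq' x
  have h1w : 1 - (Wfun d x)^2 = d * Real.cos x ^ 2 / (Real.sin x ^ 2 + d) := by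
    rw [hw2, hcos2]; field_simp; ring
  have hsq1 : Real.sqrt (1 - (Wfun d x)^2) = Real.sqrt d * Real.cos x / Real.sqrt (Real.sin x ^ 2 + d) := by
    rw [h1w, Real.sqrt_div (by positivity) _, Real.sqrt_mul hd.le, Real.sqrt_sq hcx.le]
  have hu : Real.sqrt (Real.sin x ^ 2 + d) ^ 2 = Real.sin x ^ 2 + d := Real.sq_sqrt hsd.le
  have hv : Real.sqrt d ^ 2 = d := Real.sq_sqrt hd.le
  have hdd : Real.sqrt (d*(d+1)) = Real.sqrt d * Real.sqrt (d+1) := Real.sqrt_mul hd.le _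
  have hvne : Real.sqrt d ≠ 0 := by positivity
  have hcne : Real.cos x ≠ 0 := hcx.ne'
  rw [hsq1, hdd]
  rw [← hu]
  field_simp
  rw [Real.sq_sqrt (sq_nonneg _)]
  linear_combination (Real.sqrt (Real.sin x ^ 2 + d) ^ 2) * hv
    + (d - (Real.sqrt (Real.sin x ^ 2 + d) ^ 2 + (Real.sin x ^ 2 + d)) + Real.sin x ^ 2) * hu

set_option maxHeartbeats 2000000 in
/-- the invariant measure of the arc `[0,ψ]` on the invariant curve of the
elliptic billiard corresponding to the caustic `E_λ` equals `(1/(cf))·F(φ, 1/f)` with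
`φ = arcsin √((d+1)sin²ψ/(sin²ψ+d))`. -/
theorem invariant_measure_of_arc
    (a b lam : ℝ) (hab : b < a) (hb : 0 < b) (hlam0 : 0 < lam) (hlam : lam < b^2)
    (c f J d : ℝ) (hc : c = Real.sqrt (a^2 - b^2)) (hf : f = Real.sqrt (a^2 - lam) / c)
    (hJ : J = Real.sqrt lam / (a * b)) (hd : d = (1 - J^2 * a^2) / (J^2 * c^2))
    (ψ : ℝ) (hψ : ψ ∈ Set.Icc 0 (π/2))
    (φ : ℝ)
    (hφ : φ = Real.arcsin (Real.sqrt ((d + 1) * Real.sin ψ ^ 2 / (Real.sin ψ ^ 2 + d)))) :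
    (∫ t in (0:ℝ)..ψ, 1 / (Real.sqrt (a^2 - c^2 * Real.sin t ^ 2) *
        Real.sqrt (1 - J^2 * a^2 + J^2 * c^2 * Real.sin t ^ 2))) =
      (1 / (c * f)) * ellF φ (1 / f) := by
  obtain ⟨hψ0, hψtop⟩ := hψ
  have ha : 0 < a := hb.trans hab
  have hba2 : b^2 < a^2 := by nlinarith
  have hlama : lam < a^2 := hlam.trans hba2
  have hc2 : c^2 = a^2 - b^2 := by rw [hc, Real.sq_sqrt (by nlinarith)]
  have hcpos : 0 < c := by rw [hc]; exact Real.sqrt_pos.mpr (by nlinarith)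
  have hfpos : 0 < f := by
    rw [hf]; exact div_pos (Real.sqrt_pos.mpr (by nlinarith)) hcpos
  have hcf : c * f = Real.sqrt (a^2 - lam) := by
    rw [hf]; field_simp
  have hcf2 : (c * f)^2 = a^2 - lam := by rw [hcf, Real.sq_sqrt (by nlinarith)]
  have hJ2 : J^2 = lam / (a^2 * b^2) := by
    rw [hJ, div_pow, Real.sq_sqrt hlam0.le, mul_pow]
  have hApos : 0 < 1 - J^2 * a^2 := by
    have h1 : J^2 * a^2 = lam / b^2 := by rw [hJ2]; field_simp
    rw [h1]
    have : lam / b^2 < 1 := (div_lt_one (by positivity)).mpr hlam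
    linarith
  have hBpos : 0 < J^2 * c^2 := by
    rw [hJ2, hc2]; apply mul_pos (by positivity); nlinarith
  have hdpos : 0 < d := by rw [hd]; exact div_pos hApos hBpos
  have hdv : d = a^2 * (b^2 - lam) / (lam * (a^2 - b^2)) := by
    rw [hd, hJ2, hc2]; field_simp
  have hk2 : (1/f)^2 = c^2 / (a^2 - lam) := by
    rw [hf]; field_simp
    rw [Real.sq_sqrt (by nlinarith : (0:ℝ) ≤ a^2 - lam)]
  have hk2lt : (1/f)^2 < 1 := by
    have hpos : (0:ℝ) < a^2 - lam := by nlinarith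
    rw [hk2, hc2, div_lt_one hpos]
    nlinarith
  -- continuity of the two integrands
  have hgpos : ∀ τ : ℝ, 0 < 1 - (1/f)^2 * Real.sin τ ^ 2 := by
    intro τ
    nlinarith [Real.sin_sq_le_one τ, sq_nonneg (1/f), sq_nonneg (Real.sin τ)]
  have hgcont : Continuous (fun τ => 1 / Real.sqrt (1 - (1/f)^2 * Real.sin τ ^ 2)) := by
    have h1 : Continuous (fun τ : ℝ => 1 - (1/f)^2 * Real.sin τ ^ 2) :=
      continuous_const.sub (continuous_const.mul (Real.continuous_sin.pow 2))
    exact continuous_const.div h1.sqrt (fun τ => (Real.sqrt_pos.mpr (hgpos τ)).ne')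
  have hacs : ∀ t : ℝ, 0 < a^2 - c^2 * Real.sin t ^ 2 := by
    intro t
    nlinarith [Real.sin_sq_le_one t, sq_nonneg (Real.sin t)]
  have habs : ∀ t : ℝ, 0 < 1 - J^2 * a^2 + J^2 * c^2 * Real.sin t ^ 2 := by
    intro t
    have := mul_nonneg hBpos.le (sq_nonneg (Real.sin t))
    nlinarith
  have hhcont : Continuous (fun t => 1 / (Real.sqrt (a^2 - c^2 * Real.sin t ^ 2) *
      Real.sqrt (1 - J^2 * a^2 + J^2 * c^2 * Real.sin t ^ 2))) := by
    have h1 : Continuous (fun t : ℝ => a^2 - c^2 * Real.sin t ^ 2) :=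
      continuous_const.sub (continuous_const.mul (Real.continuous_sin.pow 2))
    have h2 : Continuous (fun t : ℝ => 1 - J^2 * a^2 + J^2 * c^2 * Real.sin t ^ 2) :=
      continuous_const.add (continuous_const.mul (Real.continuous_sin.pow 2))
    exact continuous_const.div (h1.sqrt.mul h2.sqrt)
      (fun t => (mul_pos (Real.sqrt_pos.mpr (hacs t)) (Real.sqrt_pos.mpr (habs t))).ne')
  -- the pointwise identity
  have hJpos : 0 < J := by
    rw [hJ]; exact div_pos (Real.sqrt_pos.mpr hlam0) (mul_pos ha hb)
  have h1 : lam ≠ 0 := hlam0.ne'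
  have h2 : a^2 - b^2 ≠ 0 := by nlinarith
  have h3 : a^2 - lam ≠ 0 := by nlinarith
  have h4 : b^2 - lam ≠ 0 := by nlinarith
  have h5 : a ≠ 0 := by nlinarith
  have h6 : b ≠ 0 := hb.ne'
  have h7 : J ≠ 0 := hJpos.ne'
  have h8 : c ≠ 0 := hcpos.ne'
  have hcfpos : 0 < c * f := mul_pos hcpos hfpos
  have hd1' : d + 1 = b^2*(a^2-lam)/(lam*(a^2-b^2)) := by
    rw [hdv]; field_simp; ring
  have hpt : ∀ t : ℝ, (1/(c*f)) * (Efun d t * (1 / Real.sqrt (1 - (1/f)^2 * Real.sin (Phifun d t) ^ 2)))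
      = 1 / (Real.sqrt (a^2 - c^2 * Real.sin t ^ 2) *
        Real.sqrt (1 - J^2 * a^2 + J^2 * c^2 * Real.sin t ^ 2)) := by
    intro t
    have hsd : 0 < Real.sin t ^ 2 + d := by positivity
    have hP : 0 < lam*(a^2-b^2)*Real.sin t^2 + a^2*(b^2-lam) := by
      have e1 : 0 ≤ lam*(a^2-b^2)*Real.sin t^2 :=
        mul_nonneg (mul_nonneg hlam0.le (by nlinarith)) (sq_nonneg _)
      nlinarith
    have h9 : lam*(a^2-b^2)*Real.sin t^2 + a^2*(b^2-lam) ≠ 0 := hP.ne'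
    have h10 : a^2 - (a^2-b^2)*Real.sin t^2 ≠ 0 := by
      have := hacs t; rw [hc2] at this; exact this.ne'
    have hsd' : Real.sin t^2 + d
        = (lam*(a^2-b^2)*Real.sin t^2 + a^2*(b^2-lam))/(lam*(a^2-b^2)) := by
      rw [hdv]; field_simp
    simp only [Efun]
    rw [sin_Phifun_sq hdpos t]
    have hQeq : 1 - (1/f)^2 * ((d+1) * Real.sin t ^ 2 / (Real.sin t ^ 2 + d))
        = (b^2-lam)*(a^2-c^2*Real.sin t^2)/(lam*c^2*(Real.sin t^2+d)) := by
      have h9' : (a^2-b^2)*lam*Real.sin t^2 + a^2*(b^2-lam) ≠ 0 := by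
        intro h; apply h9; linear_combination h
      rw [hk2, hd1', hsd', hc2]
      field_simp
      ring
    rw [hQeq]
    have hQpos : 0 < (b^2-lam)*(a^2-c^2*Real.sin t^2)/(lam*c^2*(Real.sin t^2+d)) :=
      div_pos (mul_pos (by nlinarith) (hacs t))
        (mul_pos (mul_pos hlam0 (pow_pos hcpos 2)) hsd)
    apply eq_of_sq_eq_sq
    · exact mul_nonneg (one_div_nonneg.mpr hcfpos.le)
        (mul_nonneg (div_nonneg (Real.sqrt_nonneg _) hsd.le)
          (one_div_nonneg.mpr (Real.sqrt_nonneg _)))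
    · exact one_div_nonneg.mpr
        (mul_nonneg (Real.sqrt_nonneg _) (Real.sqrt_nonneg _))
    simp only [mul_pow, div_pow, one_pow]
    rw [Real.sq_sqrt (by nlinarith : (0:ℝ) ≤ d*(d+1)), Real.sq_sqrt hQpos.le,
      Real.sq_sqrt (hacs t).le, Real.sq_sqrt (habs t).le,
      show c^2*f^2 = a^2 - lam by rw [← mul_pow]; exact hcf2]
    have hN' : 1 - J^2*a^2 + J^2*c^2*Real.sin t^2 = J^2*c^2*(Real.sin t^2+d) := by
      rw [hd]; field_simp; ring
    rw [hN', hsd', hd1', hdv, hJ2, hc2]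
    field_simp
  -- main identity on [0, π/2)
  have key : ∀ r ∈ Set.Ico (0:ℝ) (π/2), (∫ t in (0:ℝ)..r, 1 / (Real.sqrt (a^2 - c^2 * Real.sin t ^ 2) *
        Real.sqrt (1 - J^2 * a^2 + J^2 * c^2 * Real.sin t ^ 2)))
      = (1/(c*f)) * ellF (Phifun d r) (1/f) := by
    rintro r ⟨hr0, hrlt⟩
    have hx : ∀ x ∈ Set.uIcc (0:ℝ) r, HasDerivAt (Phifun d) (Efun d x) x := by
      intro x hx
      rw [Set.uIcc_of_le hr0] at hx
      apply Phifun_hasDerivAt hdpos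
      apply Real.cos_pos_of_mem_Ioo
      constructor
      · have := hx.1; nlinarith [Real.pi_pos]
      · have := hx.2; linarith
    have hsub := intervalIntegral.integral_comp_smul_deriv hx
      (Efun_continuous hdpos).continuousOn hgcont
    calc (∫ t in (0:ℝ)..r, 1 / (Real.sqrt (a^2 - c^2 * Real.sin t ^ 2) *
        Real.sqrt (1 - J^2 * a^2 + J^2 * c^2 * Real.sin t ^ 2)))
        = ∫ t in (0:ℝ)..r, (1/(c*f)) * (Efun d t • (fun τ => 1 / Real.sqrt (1 - (1/f)^2 * Real.sin τ ^ 2)) (Phifun d t)) := by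
          apply intervalIntegral.integral_congr
          intro t _
          simp only [smul_eq_mul]
          exact (hpt t).symm
      _ = (1/(c*f)) * ∫ t in (0:ℝ)..r, Efun d t • ((fun τ => 1 / Real.sqrt (1 - (1/f)^2 * Real.sin τ ^ 2)) ∘ (Phifun d)) t := by
          rw [intervalIntegral.integral_const_mul]
          rfl
      _ = (1/(c*f)) * ellF (Phifun d r) (1/f) := by
          rw [hsub, Phifun_zero]
          rfl
  -- identify φ with Phifun d ψ
  have hφΦ : φ = Phifun d ψ := by
    have hsψ : 0 ≤ Real.sin ψ := Real.sin_nonneg_of_nonneg_of_le_pi hψ0 (by nlinarith [Real.pi_pos])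
    have hwψ : 0 ≤ Wfun d ψ := by
      apply div_nonneg (mul_nonneg (Real.sqrt_nonneg _) hsψ) (Real.sqrt_nonneg _)
    rw [hφ, Phifun]
    congr 1
    rw [← Wfun_sq hdpos, Real.sqrt_sq hwψ]
  rcases eq_or_lt_of_le hψtop with heq | hlt
  · -- ψ = π/2 : continuity argument
    subst heq
    rw [hφΦ]
    have hLcont : Continuous (fun r => ∫ t in (0:ℝ)..r, 1 / (Real.sqrt (a^2 - c^2 * Real.sin t ^ 2) *
        Real.sqrt (1 - J^2 * a^2 + J^2 * c^2 * Real.sin t ^ 2))) :=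
      intervalIntegral.continuous_primitive (fun a' b' => (hhcont.intervalIntegrable a' b')) 0
    have hgprim : Continuous (fun y => ∫ τ in (0:ℝ)..y, 1 / Real.sqrt (1 - (1/f)^2 * Real.sin τ ^ 2)) :=
      intervalIntegral.continuous_primitive (fun a' b' => hgcont.intervalIntegrable a' b') 0
    have hRcont : Continuous (fun r => (1/(c*f)) * ellF (Phifun d r) (1/f)) := by
      apply continuous_const.mul
      exact hgprim.comp (Phifun_continuous hdpos)
    have hmem : Set.Ioo (0:ℝ) (π/2) ∈ nhdsWithin (π/2) (Set.Iio (π/2)) :=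
      Ioo_mem_nhdsLT_of_mem ⟨by positivity, le_refl _⟩
    have hev : (fun r => ∫ t in (0:ℝ)..r, 1 / (Real.sqrt (a^2 - c^2 * Real.sin t ^ 2) *
        Real.sqrt (1 - J^2 * a^2 + J^2 * c^2 * Real.sin t ^ 2))) =ᶠ[nhdsWithin (π/2) (Set.Iio (π/2))]
        (fun r => (1/(c*f)) * ellF (Phifun d r) (1/f)) :=
      Filter.eventually_of_mem hmem (fun r hr => key r ⟨hr.1.le, hr.2⟩)
    have h1 : Filter.Tendsto (fun r => ∫ t in (0:ℝ)..r, 1 / (Real.sqrt (a^2 - c^2 * Real.sin t ^ 2) *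
        Real.sqrt (1 - J^2 * a^2 + J^2 * c^2 * Real.sin t ^ 2)))
        (nhdsWithin (π/2) (Set.Iio (π/2)))
        (nhds (∫ t in (0:ℝ)..(π/2), 1 / (Real.sqrt (a^2 - c^2 * Real.sin t ^ 2) *
        Real.sqrt (1 - J^2 * a^2 + J^2 * c^2 * Real.sin t ^ 2)))) :=
      (hLcont.tendsto (π/2)).mono_left nhdsWithin_le_nhds
    have h2 : Filter.Tendsto (fun r => (1/(c*f)) * ellF (Phifun d r) (1/f))
        (nhdsWithin (π/2) (Set.Iio (π/2)))
        (nhds ((1/(c*f)) * ellF (Phifun d (π/2)) (1/f))) :=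
      (hRcont.tendsto (π/2)).mono_left nhdsWithin_le_nhds
    exact tendsto_nhds_unique h1 (h2.congr' hev.symm)
  · rw [hφΦ]
    exact key ψ ⟨hψ0, hlt⟩
end
end

section
/- Let a > b > 0, 0 < λ < b², c = √(a²−b²), f = √(a²−λ)/c, J = √λ/(ab). Then the total invariant measure of the invariant curve equals U := ∫₀^{2π} dψ / (√(a² − c² sin²ψ) · √(1 − J²a² + J²c² sin²ψ)) = (4/(c f)) · K(1/f). -/
open Real intervalIntegral

noncomputable section

lemma iw_bridge (a b lam c J : ℝ) (ha : 0 < a) (hb : 0 < b)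
    (hlam0 : 0 < lam) (hlam : lam < b^2)
    (hJ2 : J^2 = lam / (a^2*b^2)) (S ψ : ℝ) (hS0 : 0 ≤ S)
    (hsin : Real.sin ψ ^ 2 * (b^2 + c^2*S) = a^2 * S) :
    a*b/(b^2 + c^2*S) *
      (1 / (Real.sqrt (a^2 - c^2 * Real.sin ψ ^ 2) *
        Real.sqrt (1 - J^2 * a^2 + J^2 * c^2 * Real.sin ψ ^ 2)))
      = 1 / Real.sqrt (b^2 - lam + c^2*S) := by
  have hcS : 0 ≤ c^2 * S := mul_nonneg (sq_nonneg c) hS0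
  have hD : 0 < b^2 + c^2*S := by nlinarith
  have hE : 0 < b^2 - lam + c^2*S := by nlinarith
  have hR1 : a^2 - c^2 * Real.sin ψ ^ 2 = a^2*b^2/(b^2 + c^2*S) := by
    field_simp
    linear_combination (-(c^2)) * hsin
  have hR2 : 1 - J^2 * a^2 + J^2 * c^2 * Real.sin ψ ^ 2
      = (b^2 - lam + c^2*S)/(b^2 + c^2*S) := by
    have ha2 : a^2 ≠ 0 := by positivity
    have hb2 : b^2 ≠ 0 := by positivity
    rw [hJ2]
    field_simp
    linear_combination (lam * c^2) * hsin
  rw [hR1, hR2, ← Real.sqrt_mul (by positivity)]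
  have key : a^2*b^2/(b^2 + c^2*S) * ((b^2 - lam + c^2*S)/(b^2 + c^2*S))
      = (a*b/(b^2 + c^2*S))^2 * (b^2 - lam + c^2*S) := by ring
  rw [key, Real.sqrt_mul (sq_nonneg _), Real.sqrt_sq (by positivity)]
  have hsE : 0 < Real.sqrt (b^2 - lam + c^2*S) := Real.sqrt_pos.mpr hE
  field_simp

lemma iw_D_eq (a b c θ : ℝ) (hc2 : c^2 = a^2 - b^2) :
    b^2 + c^2 * Real.sin θ^2 = b^2 * Real.cos θ^2 + a^2 * Real.sin θ^2 := by
  linear_combination (-(b^2)) * Real.sin_sq_add_cos_sq θ + Real.sin θ^2 * hc2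

lemma iw_deriv1 (a b c : ℝ) (ha : 0 < a) (hb : 0 < b) (hc2 : c^2 = a^2 - b^2)
    (θ : ℝ) (hcos : Real.cos θ ≠ 0) :
    HasDerivAt (fun t => Real.arctan ((a/b) * Real.tan t))
      (a*b/(b^2 + c^2 * Real.sin θ^2)) θ := by
  have h1 : HasDerivAt (fun t => (a/b) * Real.tan t) ((a/b) * (1 / Real.cos θ^2)) θ :=
    (Real.hasDerivAt_tan hcos).const_mul _
  have h3 := (Real.hasDerivAt_arctan ((a/b) * Real.tan θ)).comp θ h1
  refine h3.congr_deriv ?_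
  symm
  rw [iw_D_eq a b c θ hc2, Real.tan_eq_sin_div_cos]
  have hD : b^2 * Real.cos θ^2 + a^2 * Real.sin θ^2 ≠ 0 := by
    have := sq_nonneg (Real.sin θ)
    have h4 : 0 < Real.cos θ^2 := by positivity
    positivity
  field_simp

lemma iw_sin1 (a b c : ℝ) (ha : 0 < a) (hb : 0 < b) (hc2 : c^2 = a^2 - b^2)
    (θ : ℝ) (hcos : Real.cos θ ≠ 0) :
    Real.sin (Real.arctan ((a/b) * Real.tan θ)) ^ 2 * (b^2 + c^2 * Real.sin θ^2)
      = a^2 * Real.sin θ^2 := by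
  rw [iw_D_eq a b c θ hc2, Real.sin_arctan]
  rw [div_pow, Real.sq_sqrt (by positivity)]
  rw [Real.tan_eq_sin_div_cos]
  field_simp

lemma iw_deriv2 (a b c : ℝ) (ha : 0 < a) (hb : 0 < b) (hc2 : c^2 = a^2 - b^2)
    (θ : ℝ) (hsin : Real.sin θ ≠ 0) :
    HasDerivAt (fun t => π/2 - Real.arctan ((b/a) * (Real.cos t / Real.sin t)))
      (a*b/(b^2 + c^2 * Real.sin θ^2)) θ := by
  have h1 : HasDerivAt (fun t => Real.cos t / Real.sin t)
      ((-Real.sin θ * Real.sin θ - Real.cos θ * Real.cos θ)/Real.sin θ^2) θ :=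
    (Real.hasDerivAt_cos θ).div (Real.hasDerivAt_sin θ) hsin
  have h2 : HasDerivAt (fun t => (b/a) * (Real.cos t / Real.sin t))
      ((b/a) * ((-Real.sin θ * Real.sin θ - Real.cos θ * Real.cos θ)/Real.sin θ^2)) θ :=
    h1.const_mul _
  have h3 := ((Real.hasDerivAt_arctan ((b/a) * (Real.cos θ / Real.sin θ))).comp θ h2).const_sub (π/2)
  refine h3.congr_deriv ?_
  symm
  rw [iw_D_eq a b c θ hc2]
  have hD : b^2 * Real.cos θ^2 + a^2 * Real.sin θ^2 ≠ 0 := by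
    have := sq_nonneg (Real.cos θ)
    have h4 : 0 < Real.sin θ^2 := by positivity
    positivity
  field_simp
  linear_combination (-(b^2*Real.cos θ^2+a^2*Real.sin θ^2)) * Real.sin_sq_add_cos_sq θ

lemma iw_sin2 (a b c : ℝ) (ha : 0 < a) (hb : 0 < b) (hc2 : c^2 = a^2 - b^2)
    (θ : ℝ) (hsin : Real.sin θ ≠ 0) :
    Real.sin (π/2 - Real.arctan ((b/a) * (Real.cos θ / Real.sin θ))) ^ 2
      * (b^2 + c^2 * Real.sin θ^2) = a^2 * Real.sin θ^2 := by
  rw [iw_D_eq a b c θ hc2, Real.sin_pi_div_two_sub, Real.cos_arctan]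
  rw [div_pow, Real.sq_sqrt (by positivity), one_pow]
  field_simp
  ring

/-- the total invariant measure of the invariant curve corresponding to the
caustic `E_λ` equals `U = (4/(cf))·K(1/f)`. -/
theorem total_invariant_measure
    (a b lam : ℝ) (hab : b < a) (hb : 0 < b) (hlam0 : 0 < lam) (hlam : lam < b^2)
    (c f J : ℝ) (hc : c = Real.sqrt (a^2 - b^2)) (hf : f = Real.sqrt (a^2 - lam) / c)
    (hJ : J = Real.sqrt lam / (a * b)) :
    (∫ t in (0:ℝ)..(2*π), 1 / (Real.sqrt (a^2 - c^2 * Real.sin t ^ 2) *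
        Real.sqrt (1 - J^2 * a^2 + J^2 * c^2 * Real.sin t ^ 2))) =
      (4 / (c * f)) * ellF (π/2) (1 / f) := by
  have ha : 0 < a := hb.trans hab
  have hb2a2 : b^2 < a^2 := by nlinarith
  have hc2 : c^2 = a^2 - b^2 := by rw [hc]; exact Real.sq_sqrt (by nlinarith)
  have hcpos : 0 < c := by rw [hc]; exact Real.sqrt_pos.mpr (by nlinarith)
  have hJ2 : J^2 = lam / (a^2 * b^2) := by rw [hJ, div_pow, Real.sq_sqrt hlam0.le, mul_pow]
  have hlama : lam < a^2 := by nlinarith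
  have hfpos : 0 < f := by
    rw [hf]; exact div_pos (Real.sqrt_pos.mpr (by nlinarith)) hcpos
  have hcf2 : c^2 * f^2 = a^2 - lam := by
    rw [hf, div_pow, Real.sq_sqrt (by nlinarith : (0:ℝ) ≤ a^2 - lam)]
    field_simp
  set F : ℝ → ℝ := fun t => 1 / (Real.sqrt (a^2 - c^2 * Real.sin t ^ 2) *
        Real.sqrt (1 - J^2 * a^2 + J^2 * c^2 * Real.sin t ^ 2)) with hFdef
  set G : ℝ → ℝ := fun t => 1 / Real.sqrt (b^2 - lam + c^2 * Real.sin t ^ 2) with hGdef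
  have hP1 : ∀ t : ℝ, 0 < a^2 - c^2 * Real.sin t ^ 2 := by
    intro t
    nlinarith [Real.sin_sq_le_one t, sq_nonneg c,
      mul_le_mul_of_nonneg_left (Real.sin_sq_le_one t) (sq_nonneg c)]
  have hJa : J^2 * a^2 = lam / b^2 := by rw [hJ2]; field_simp
  have hP2 : ∀ t : ℝ, 0 < 1 - J^2 * a^2 + J^2 * c^2 * Real.sin t ^ 2 := by
    intro t
    have h1 : 0 ≤ J^2 * c^2 * Real.sin t ^ 2 := by positivity
    have h2 : lam / b^2 < 1 := (div_lt_one (by positivity)).mpr hlam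
    rw [hJa]; linarith
  have hEp : ∀ t : ℝ, 0 < b^2 - lam + c^2 * Real.sin t ^ 2 := by
    intro t; nlinarith [sq_nonneg (c * Real.sin t)]
  have hDp : ∀ t : ℝ, 0 < b^2 + c^2 * Real.sin t ^ 2 := by
    intro t; nlinarith [sq_nonneg (c * Real.sin t)]
  have hFc : Continuous F := by
    rw [hFdef]
    apply Continuous.div continuous_const
    · exact (Real.continuous_sqrt.comp (by fun_prop)).mul
        (Real.continuous_sqrt.comp (by fun_prop))
    · intro t
      exact (mul_pos (Real.sqrt_pos.mpr (hP1 t)) (Real.sqrt_pos.mpr (hP2 t))).ne'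
  have hGc : Continuous G := by
    rw [hGdef]
    apply Continuous.div continuous_const
    · exact Real.continuous_sqrt.comp (by fun_prop)
    · intro t; exact (Real.sqrt_pos.mpr (hEp t)).ne'
  have hFi : ∀ u v : ℝ, IntervalIntegrable F MeasureTheory.volume u v :=
    fun u v => hFc.intervalIntegrable u v
  have hGi : ∀ u v : ℝ, IntervalIntegrable G MeasureTheory.volume u v :=
    fun u v => hGc.intervalIntegrable u v
  have hπ : 0 < π := Real.pi_pos
  -- Step A : reduce to a quarter period
  have hA1 : (∫ t in (π:ℝ)..(2*π), F t) = ∫ t in (0:ℝ)..π, F t := by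
    have h := intervalIntegral.integral_comp_add_right (a := (0:ℝ)) (b := π) F π
    rw [zero_add, show π + π = 2*π by ring] at h
    rw [← h]
    apply intervalIntegral.integral_congr
    intro t ht
    simp only [hFdef, Real.sin_add_pi, neg_sq]
  have hA2 : (∫ t in (π/2:ℝ)..π, F t) = ∫ t in (0:ℝ)..(π/2), F t := by
    have h := intervalIntegral.integral_comp_sub_left (a := (0:ℝ)) (b := π/2) F π
    rw [sub_zero, show π - π/2 = π/2 by ring] at h
    rw [← h]
    apply intervalIntegral.integral_congr
    intro t ht
    simp only [hFdef, Real.sin_pi_sub]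
  have hA : (∫ t in (0:ℝ)..(2*π), F t) = 4 * ∫ t in (0:ℝ)..(π/2), F t := by
    rw [← intervalIntegral.integral_add_adjacent_intervals (hFi 0 π) (hFi π (2*π)), hA1,
        ← intervalIntegral.integral_add_adjacent_intervals (hFi 0 (π/2)) (hFi (π/2) π), hA2]
    ring
  -- Step C : the substitution
  set ψ0 := Real.arctan (a/b) with hψ0
  have hf'c : Continuous (fun θ : ℝ => a*b/(b^2 + c^2 * Real.sin θ^2)) := by
    apply continuous_const.div (by fun_prop)
    intro θ; exact (hDp θ).ne'
  have hsub1 : (∫ θ in (0:ℝ)..(π/4), G θ) = ∫ x in (0:ℝ)..ψ0, F x := by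
    have hcos : ∀ θ ∈ Set.Icc (0:ℝ) (π/4), Real.cos θ ≠ 0 := by
      intro θ hθ
      exact (Real.cos_pos_of_mem_Ioo ⟨by linarith [hθ.1], by linarith [hθ.2]⟩).ne'
    have hder : ∀ θ ∈ Set.uIcc (0:ℝ) (π/4),
        HasDerivAt (fun t => Real.arctan ((a/b) * Real.tan t))
          (a*b/(b^2 + c^2 * Real.sin θ^2)) θ := by
      intro θ hθ
      rw [Set.uIcc_of_le (by positivity)] at hθ
      exact iw_deriv1 a b c ha hb hc2 θ (hcos θ hθ)
    have h := intervalIntegral.integral_comp_smul_deriv hder hf'c.continuousOn hFc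
    have hend : Real.arctan ((a/b) * Real.tan 0) = 0 := by simp
    have hend2 : Real.arctan ((a/b) * Real.tan (π/4)) = ψ0 := by
      rw [Real.tan_pi_div_four, mul_one]
    rw [hend, hend2] at h
    rw [← h]
    apply intervalIntegral.integral_congr
    intro θ hθ
    rw [Set.uIcc_of_le (by positivity)] at hθ
    have hkey := iw_bridge a b lam c J ha hb hlam0 hlam hJ2 (Real.sin θ^2)
      (Real.arctan ((a/b) * Real.tan θ)) (sq_nonneg _) (iw_sin1 a b c ha hb hc2 θ (hcos θ hθ))
    simp only [hGdef, hFdef, Function.comp_apply, smul_eq_mul]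
    exact hkey.symm
  have hsub2 : (∫ θ in (π/4:ℝ)..(π/2), G θ) = ∫ x in ψ0..(π/2), F x := by
    have hsin : ∀ θ ∈ Set.Icc (π/4:ℝ) (π/2), Real.sin θ ≠ 0 := by
      intro θ hθ
      exact (Real.sin_pos_of_pos_of_lt_pi (by linarith [hθ.1]) (by linarith [hθ.2])).ne'
    have hder : ∀ θ ∈ Set.uIcc (π/4:ℝ) (π/2),
        HasDerivAt (fun t => π/2 - Real.arctan ((b/a) * (Real.cos t / Real.sin t)))
          (a*b/(b^2 + c^2 * Real.sin θ^2)) θ := by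
      intro θ hθ
      rw [Set.uIcc_of_le (by linarith)] at hθ
      exact iw_deriv2 a b c ha hb hc2 θ (hsin θ hθ)
    have h := intervalIntegral.integral_comp_smul_deriv hder hf'c.continuousOn hFc
    have hend : π/2 - Real.arctan ((b/a) * (Real.cos (π/4) / Real.sin (π/4))) = ψ0 := by
      rw [Real.cos_pi_div_four, Real.sin_pi_div_four, div_self (by positivity), mul_one, hψ0,
        show (a/b) = (b/a)⁻¹ by rw [inv_div], Real.arctan_inv_of_pos (by positivity)]
    have hend2 : π/2 - Real.arctan ((b/a) * (Real.cos (π/2) / Real.sin (π/2))) = π/2 := by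
      simp [Real.cos_pi_div_two]
    rw [hend, hend2] at h
    rw [← h]
    apply intervalIntegral.integral_congr
    intro θ hθ
    rw [Set.uIcc_of_le (by linarith)] at hθ
    have hkey := iw_bridge a b lam c J ha hb hlam0 hlam hJ2 (Real.sin θ^2)
      (π/2 - Real.arctan ((b/a) * (Real.cos θ / Real.sin θ))) (sq_nonneg _)
      (iw_sin2 a b c ha hb hc2 θ (hsin θ hθ))
    simp only [hGdef, hFdef, Function.comp_apply, smul_eq_mul]
    exact hkey.symm
  have hC : (∫ t in (0:ℝ)..(π/2), F t) = ∫ t in (0:ℝ)..(π/2), G t := by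
    rw [← intervalIntegral.integral_add_adjacent_intervals (hFi 0 ψ0) (hFi ψ0 (π/2)),
        ← hsub1, ← hsub2,
        intervalIntegral.integral_add_adjacent_intervals (hGi 0 (π/4)) (hGi (π/4) (π/2))]
  -- Step B : rewrite the right-hand side
  have hB : (4/(c*f)) * ellF (π/2) (1/f) = 4 * ∫ t in (0:ℝ)..(π/2), G t := by
    have hflip := intervalIntegral.integral_comp_sub_left (a := (0:ℝ)) (b := π/2) G (π/2)
    rw [sub_zero, sub_self] at hflip
    rw [← hflip]
    simp only [ellF]
    rw [← intervalIntegral.integral_const_mul, ← intervalIntegral.integral_const_mul]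
    apply intervalIntegral.integral_congr
    intro t ht
    have hX : 0 < b^2 - lam + c^2 * Real.cos t^2 := by
      have h0 : 0 ≤ c^2 * Real.cos t^2 := by positivity
      linarith
    have h5 : 1 - (1/f)^2 * Real.sin t^2 = (b^2 - lam + c^2 * Real.cos t^2)/(c*f)^2 := by
      have hfne : f ≠ 0 := hfpos.ne'
      have hcne : c ≠ 0 := hcpos.ne'
      field_simp
      linear_combination hcf2 - hc2 - c^2 * Real.sin_sq_add_cos_sq t
    simp only [hGdef, Real.sin_pi_div_two_sub]
    rw [h5, Real.sqrt_div hX.le, Real.sqrt_sq (by positivity : (0:ℝ) ≤ c*f)]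
    have hsX : 0 < Real.sqrt (b^2 - lam + c^2 * Real.cos t^2) := Real.sqrt_pos.mpr hX
    have hcfne : c*f ≠ 0 := by positivity
    field_simp
  calc (∫ t in (0:ℝ)..(2*π), F t) = 4 * ∫ t in (0:ℝ)..(π/2), F t := hA
    _ = 4 * ∫ t in (0:ℝ)..(π/2), G t := by rw [hC]
    _ = (4/(c*f)) * ellF (π/2) (1/f) := hB.symm
end
end

section
/- Let a > b > 0, 0 < λ < b², c = √(a²−b²), f = √(a²−λ)/c, J = √λ/(ab), and let θ ∈ (0,π/2) be defined by tan θ = a√λ/(b√(a²−λ)). Then ∫₀^θ dt / (√(a² − c² sin²t) · √(1 − J²a² + J²c² sin²t)) = (1/(c f)) · F(arcsin(√λ/b), 1/f). (This computes the invariant measure of the arc between a vertical billiard chord tangent to E_λ and its reflection, which yields the rotation number formula.) -/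
open Real intervalIntegral

noncomputable section

set_option maxHeartbeats 2000000 in
/-- the invariant measure of the arc `[0,θ]`, where `θ ∈ (0,π/2)` is
defined by `tan θ = a√λ/(b√(a²−λ))`, equals `(1/(cf))·F(arcsin(√λ/b), 1/f)`. -/
theorem invariant_measure_half_chord
    (a b lam : ℝ) (hab : b < a) (hb : 0 < b) (hlam0 : 0 < lam) (hlam : lam < b^2)
    (c f J : ℝ) (hc : c = Real.sqrt (a^2 - b^2)) (hf : f = Real.sqrt (a^2 - lam) / c)
    (hJ : J = Real.sqrt lam / (a * b))
    (θ : ℝ) (hθ : θ ∈ Set.Ioo 0 (π/2))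
    (htanθ : Real.tan θ = a * Real.sqrt lam / (b * Real.sqrt (a^2 - lam))) :
    (∫ t in (0:ℝ)..θ, 1 / (Real.sqrt (a^2 - c^2 * Real.sin t ^ 2) *
        Real.sqrt (1 - J^2 * a^2 + J^2 * c^2 * Real.sin t ^ 2))) =
      (1 / (c * f)) * ellF (Real.arcsin (Real.sqrt lam / b)) (1 / f) := by
  obtain ⟨hθ0, hθ2⟩ := hθ
  have ha : 0 < a := hb.trans hab
  have hba2 : b^2 < a^2 := by
    have := pow_lt_pow_left₀ hab hb.le two_ne_zero
    simpa using this
  have hlab : lam < a^2 := hlam.trans hba2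
  have hal : 0 < a^2 - lam := by linarith
  have hbl : 0 < b^2 - lam := by linarith
  have hc2 : c^2 = a^2 - b^2 := by rw [hc]; exact Real.sq_sqrt (by linarith)
  have hcpos : 0 < c := by rw [hc]; exact Real.sqrt_pos.2 (by linarith)
  have hsal : 0 < Real.sqrt (a^2 - lam) := Real.sqrt_pos.2 hal
  have hsal2 : Real.sqrt (a^2 - lam) ^ 2 = a^2 - lam := Real.sq_sqrt hal.le
  have hslam2 : Real.sqrt lam ^ 2 = lam := Real.sq_sqrt hlam0.le
  have hcf : c * f = Real.sqrt (a^2 - lam) := by rw [hf]; field_simp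
  have hcfpos : 0 < c * f := by rw [hcf]; exact hsal
  have hk : 1 / f = c / Real.sqrt (a^2 - lam) := by rw [hf, one_div_div]
  have hk2 : (1/f)^2 = c^2 / (a^2 - lam) := by rw [hk, div_pow, hsal2]
  -- abbreviations
  set P : ℝ := a^2 * (b^2 - lam) with hPdef
  set Q : ℝ := lam * c^2 with hQdef
  set N : ℝ := b * Real.sqrt (a^2 - lam) with hNdef
  have hP : 0 < P := by positivity
  have hQ : 0 < Q := by positivity
  have hN : 0 < N := by positivity
  have hN2 : N^2 = b^2 * (a^2 - lam) := by rw [hNdef, mul_pow, hsal2]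
  have hNPQ : N^2 = P + Q := by rw [hN2, hPdef, hQdef, hc2]; ring
  have hsP : Real.sqrt P = a * Real.sqrt (b^2 - lam) := by
    rw [hPdef, Real.sqrt_mul (by positivity), Real.sqrt_sq ha.le]
  have hsPpos : 0 < Real.sqrt P := Real.sqrt_pos.2 hP
  have hsbl : 0 < Real.sqrt (b^2 - lam) := Real.sqrt_pos.2 hbl
  have hPmm : Real.sqrt P * Real.sqrt P = P := Real.mul_self_sqrt hP.le
  have hD : ∀ t : ℝ, 0 < P + Q * Real.sin t ^ 2 := fun t => by positivity
  have hsDpos : ∀ t : ℝ, 0 < Real.sqrt (P + Q * Real.sin t ^ 2) := fun t =>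
    Real.sqrt_pos.2 (hD t)
  have hsD2 : ∀ t : ℝ, Real.sqrt (P + Q * Real.sin t ^ 2) ^ 2 = P + Q * Real.sin t ^ 2 :=
    fun t => Real.sq_sqrt (hD t).le
  have hDmm : ∀ t : ℝ, Real.sqrt (P + Q * Real.sin t ^ 2) * Real.sqrt (P + Q * Real.sin t ^ 2)
      = P + Q * Real.sin t ^ 2 := fun t => Real.mul_self_sqrt (hD t).le
  -- the substitution map
  set u : ℝ → ℝ := fun t => N * Real.sin t / Real.sqrt (P + Q * Real.sin t ^ 2) with hudef
  set ψ : ℝ → ℝ := fun t => Real.arcsin (u t) with hψdef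
  have hu2 : ∀ t : ℝ, u t ^ 2 = N^2 * Real.sin t ^2 / (P + Q * Real.sin t ^ 2) := by
    intro t
    rw [hudef]; simp only
    rw [div_pow, mul_pow, hsD2 t]
  -- bounds on [0, θ]
  have hbounds : ∀ t ∈ Set.Icc (0:ℝ) θ, 0 ≤ Real.sin t ∧ 0 < Real.cos t ∧ Real.sin t ^ 2 < 1 := by
    intro t ht
    have h1 : 0 ≤ Real.sin t := Real.sin_nonneg_of_nonneg_of_le_pi ht.1
      (by linarith [Real.pi_pos, ht.2])
    have h2 : 0 < Real.cos t := Real.cos_pos_of_mem_Ioo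
      ⟨by linarith [Real.pi_pos, ht.1], by linarith [ht.2]⟩
    have h3 : Real.sin t ^ 2 < 1 := by
      have h4 := Real.sin_sq_add_cos_sq t
      have h5 : 0 < Real.cos t * Real.cos t := mul_pos h2 h2
      have h6 : Real.cos t ^ 2 = Real.cos t * Real.cos t := sq (Real.cos t)
      linarith
    exact ⟨h1, h2, h3⟩
  have hu_lt : ∀ t ∈ Set.Icc (0:ℝ) θ, 0 ≤ u t ∧ u t < 1 := by
    intro t ht
    obtain ⟨h1, _, h3⟩ := hbounds t ht
    have hnn : 0 ≤ u t := by
      rw [hudef]; exact div_nonneg (by positivity) (Real.sqrt_nonneg _)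
    have hsq : u t ^ 2 < 1 := by
      rw [hu2 t, div_lt_one (hD t), hNPQ]
      calc (P+Q) * Real.sin t ^2 = P * Real.sin t ^2 + Q * Real.sin t ^2 := by ring
        _ < P + Q * Real.sin t ^2 := by linarith [mul_lt_of_lt_one_right hP h3]
    refine ⟨hnn, lt_of_pow_lt_pow_left₀ 2 zero_le_one ?_⟩
    simpa using hsq
  -- 1 - u² formula
  have h1u : ∀ t : ℝ, 1 - u t ^ 2 = P * Real.cos t ^ 2 / (P + Q * Real.sin t ^ 2) := by
    intro t
    have hst := Real.sin_sq_add_cos_sq t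
    rw [hu2 t, hNPQ]
    field_simp
    linear_combination (-P)*hst
  -- derivative of ψ on [0,θ]
  have hderiv : ∀ t ∈ Set.Icc (0:ℝ) θ,
      HasDerivAt ψ (N * Real.sqrt P / (P + Q * Real.sin t ^ 2)) t := by
    intro t ht
    obtain ⟨hs0, hcos, hs1⟩ := hbounds t ht
    obtain ⟨hu0, hu1⟩ := hu_lt t ht
    have h1 : HasDerivAt (fun s => P + Q * Real.sin s ^ 2)
        (Q * (2 * Real.sin t ^ 1 * Real.cos t)) t :=
      (((Real.hasDerivAt_sin t).pow 2).const_mul Q).const_add P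
    have h2 : HasDerivAt (fun s => Real.sqrt (P + Q * Real.sin s ^ 2))
        (Q * (2 * Real.sin t ^ 1 * Real.cos t) / (2 * Real.sqrt (P + Q * Real.sin t ^ 2))) t :=
      h1.sqrt (hD t).ne'
    have h3 : HasDerivAt (fun s => N * Real.sin s) (N * Real.cos t) t :=
      (Real.hasDerivAt_sin t).const_mul N
    have h4 : HasDerivAt u
        ((N * Real.cos t * Real.sqrt (P + Q * Real.sin t ^ 2) -
          N * Real.sin t * (Q * (2 * Real.sin t ^ 1 * Real.cos t) /
            (2 * Real.sqrt (P + Q * Real.sin t ^ 2)))) /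
          Real.sqrt (P + Q * Real.sin t ^ 2) ^ 2) t := h3.div h2 (hsDpos t).ne'
    have h5 : HasDerivAt Real.arcsin (1 / Real.sqrt (1 - u t ^ 2)) (u t) :=
      Real.hasDerivAt_arcsin (by linarith) (by linarith)
    have h6 : HasDerivAt ψ
        (1 / Real.sqrt (1 - u t ^ 2) *
          ((N * Real.cos t * Real.sqrt (P + Q * Real.sin t ^ 2) -
            N * Real.sin t * (Q * (2 * Real.sin t ^ 1 * Real.cos t) /
              (2 * Real.sqrt (P + Q * Real.sin t ^ 2)))) /
            Real.sqrt (P + Q * Real.sin t ^ 2) ^ 2)) t := h5.comp t h4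
    convert h6 using 1
    have hs1u : Real.sqrt (1 - u t ^ 2) =
        Real.sqrt P * Real.cos t / Real.sqrt (P + Q * Real.sin t ^ 2) := by
      rw [h1u t, Real.sqrt_div (by positivity), Real.sqrt_mul hP.le, Real.sqrt_sq hcos.le]
    rw [hs1u, hsD2 t]
    set S := Real.sqrt (P + Q * Real.sin t ^ 2) with hSdef
    have hSmm : S * S = P + Q * Real.sin t ^ 2 := hDmm t
    have hSne : S ≠ 0 := (hsDpos t).ne'
    have hpne : Real.sqrt P ≠ 0 := hsPpos.ne'
    have hcone : Real.cos t ≠ 0 := hcos.ne'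
    have hDne : P + Q * Real.sin t ^ 2 ≠ 0 := (hD t).ne'
    field_simp
    linear_combination hPmm - hSmm
  -- endpoint values of ψ
  have hψ0 : ψ 0 = 0 := by
    rw [hψdef, hudef]; simp
  have hsinθ2 : Real.sin θ ^ 2 = a^2 * lam / (a^2*b^2 + lam*c^2) := by
    set T : ℝ := a * Real.sqrt lam / (b * Real.sqrt (a^2 - lam)) with hTdef
    have hθeq : θ = Real.arctan T := by
      rw [← htanθ, Real.arctan_tan (by linarith) hθ2]
    have hT2 : T^2 = a^2 * lam / (b^2 * (a^2 - lam)) := by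
      rw [hTdef, div_pow, mul_pow, mul_pow, hslam2, hsal2]
    have h1T : (0:ℝ) < 1 + T^2 := by positivity
    rw [hθeq, Real.sin_arctan, div_pow, Real.sq_sqrt h1T.le, hT2, hc2]
    have hd1 : b^2 * (a^2 - lam) ≠ 0 := by positivity
    have hd2 : a^2*b^2 + lam*(a^2-b^2) ≠ 0 := by
      have h1 : (0:ℝ) < a^2*b^2 + lam*(a^2-b^2) :=
        add_pos (by positivity) (mul_pos hlam0 (by linarith))
      exact h1.ne'
    field_simp
    ring
  have hψθ : ψ θ = Real.arcsin (Real.sqrt lam / b) := by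
    have hθmem : θ ∈ Set.Icc (0:ℝ) θ := ⟨hθ0.le, le_refl θ⟩
    obtain ⟨hu0, hu1⟩ := hu_lt θ hθmem
    have huθ2 : u θ ^ 2 = lam / b^2 := by
      rw [hu2 θ, hN2, hsinθ2, hPdef, hQdef, hc2]
      have hd2 : (0:ℝ) < a^2*b^2 + lam*(a^2-b^2) :=
        add_pos (by positivity) (mul_pos hlam0 (by linarith))
      have hDθ : (0:ℝ) < a^2*(b^2-lam) + lam*(a^2-b^2) * (a^2*lam/(a^2*b^2+lam*(a^2-b^2))) := by
        have h : (0:ℝ) ≤ lam*(a^2-b^2) * (a^2*lam/(a^2*b^2+lam*(a^2-b^2))) :=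
          mul_nonneg (mul_nonneg hlam0.le (by linarith [hba2])) (by positivity)
        have h2 : (0:ℝ) < a^2*(b^2-lam) := by positivity
        linarith
      have hz : (0:ℝ) < -(b^4*a^2*lam) + b^4*a^4 := by
        have h1 : (0:ℝ) < b^4*a^2*(a^2 - lam) := by positivity
        linarith [h1]
      have hd3 : (0:ℝ) < b^2*a^2 + lam*(a^2-b^2) := by linarith [hd2, mul_comm (a^2) (b^2)]
      field_simp
      rw [div_eq_one_iff_eq (by positivity)]
      ring
    have : u θ = Real.sqrt (lam / b^2) := by
      rw [← huθ2, Real.sqrt_sq hu0]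
    rw [hψdef]; simp only
    rw [this, Real.sqrt_div hlam0.le, Real.sqrt_sq hb.le]
  -- the transformed integrand and its continuity
  set g : ℝ → ℝ := fun s => 1/(c*f) * (1 / Real.sqrt (1 - (1/f)^2 * Real.sin s ^ 2)) with hgdef
  have hgpos : ∀ s : ℝ, 0 < 1 - (1/f)^2 * Real.sin s ^ 2 := by
    intro s
    rw [hk2]
    have h1 : Real.sin s ^ 2 ≤ 1 := Real.sin_sq_le_one s
    have h2 : c^2 < a^2 - lam := by rw [hc2]; linarith
    have h3 : c^2 / (a^2 - lam) < 1 := (div_lt_one hal).2 h2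
    have h4 : c^2/(a^2-lam) * Real.sin s ^2 ≤ c^2/(a^2-lam) :=
      mul_le_of_le_one_right (by positivity) h1
    linarith
  have hgcont : Continuous g := by
    apply continuous_const.mul
    apply Continuous.div continuous_const
    · exact Real.continuous_sqrt.comp (by continuity)
    · intro s
      exact (Real.sqrt_pos.2 (hgpos s)).ne'
  have hψ'cont : ContinuousOn (fun t => N * Real.sqrt P / (P + Q * Real.sin t ^ 2))
      (Set.uIcc (0:ℝ) θ) := by
    apply Continuous.continuousOn
    exact continuous_const.div (by continuity) (fun t => (hD t).ne')
  -- pointwise equality of integrands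
  have hJ2 : J^2 = lam / (a^2 * b^2) := by
    rw [hJ, div_pow, hslam2, mul_pow]
  have habne : (a:ℝ) * b ≠ 0 := by positivity
  have heqon : Set.EqOn
      (fun t => 1 / (Real.sqrt (a^2 - c^2 * Real.sin t ^ 2) *
        Real.sqrt (1 - J^2 * a^2 + J^2 * c^2 * Real.sin t ^ 2)))
      (fun t => (N * Real.sqrt P / (P + Q * Real.sin t ^ 2)) • (g ∘ ψ) t)
      (Set.uIcc (0:ℝ) θ) := by
    rw [Set.uIcc_of_le hθ0.le]
    intro t ht
    obtain ⟨hs0, hcos, hs1⟩ := hbounds t ht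
    obtain ⟨hu0, hu1⟩ := hu_lt t ht
    have hA : 0 < a^2 - c^2 * Real.sin t ^ 2 := by
      have h5 : c^2 * Real.sin t ^ 2 ≤ c^2 :=
        mul_le_of_le_one_right (sq_nonneg c) (Real.sin_sq_le_one t)
      have h6 : 0 < b^2 := pow_pos hb 2
      linarith [hc2, h5, h6]
    have hsinψ : Real.sin (ψ t) = u t := Real.sin_arcsin (by linarith) hu1.le
    have hB : 1 - J^2 * a^2 + J^2 * c^2 * Real.sin t ^ 2
        = (P + Q * Real.sin t ^ 2) / (a^2 * b^2) := by
      rw [hJ2, hPdef, hQdef]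
      field_simp
    have hC : 1 - (1/f)^2 * u t ^ 2
        = (b^2 - lam) * (a^2 - c^2 * Real.sin t ^ 2) / (P + Q * Real.sin t ^ 2) := by
      rw [hk2, hu2, hN2, hPdef, hQdef]
      field_simp
      ring
    simp only [hgdef, Function.comp_apply, smul_eq_mul]
    rw [hsinψ, hB, hC, hcf]
    have hab2 : a^2 * b^2 = (a*b)^2 := by ring
    rw [hab2, Real.sqrt_div (hD t).le, Real.sqrt_sq (by positivity : (0:ℝ) ≤ a*b)]
    rw [Real.sqrt_div (by positivity : (0:ℝ) ≤ (b^2-lam) * (a^2 - c^2*Real.sin t^2)),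
      Real.sqrt_mul hbl.le]
    rw [hsP, hNdef]
    have hsA : 0 < Real.sqrt (a^2 - c^2 * Real.sin t ^ 2) := Real.sqrt_pos.2 hA
    set S := Real.sqrt (P + Q * Real.sin t ^ 2) with hSdef
    have hSmm : S * S = P + Q * Real.sin t ^ 2 := hDmm t
    have hSpos : 0 < S := hsDpos t
    field_simp
    linear_combination -hSmm
  -- put it together
  calc (∫ t in (0:ℝ)..θ, 1 / (Real.sqrt (a^2 - c^2 * Real.sin t ^ 2) *
        Real.sqrt (1 - J^2 * a^2 + J^2 * c^2 * Real.sin t ^ 2)))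
      = ∫ t in (0:ℝ)..θ, (N * Real.sqrt P / (P + Q * Real.sin t ^ 2)) • (g ∘ ψ) t :=
        intervalIntegral.integral_congr heqon
    _ = ∫ s in (ψ 0)..(ψ θ), g s := by
        apply intervalIntegral.integral_comp_smul_deriv _ hψ'cont hgcont
        rw [Set.uIcc_of_le hθ0.le]
        exact hderiv
    _ = (1 / (c * f)) * ellF (Real.arcsin (Real.sqrt lam / b)) (1 / f) := by
        rw [hψ0, hψθ, hgdef, ellF]
        exact intervalIntegral.integral_const_mul _ _
end
end

section
/- Let a > b > 0, 0 < λ < b², c = √(a²−b²), f = √(a²−λ)/c, J = √λ/(ab), and write h(ψ) = √(a² cos²ψ + b² sin²ψ). Then ∫₀^{π/2} arcsin(J·h(ψ)) / ( h(ψ) · √(1 − J² h(ψ)²) ) dψ = (π/(2 c f)) · F(arcsin(√λ/b), 1/f). -/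
open Real intervalIntegral

open MeasureTheory Filter Set

set_option maxHeartbeats 1000000


lemma aux_arcsin_int (z : ℝ) (h0 : 0 ≤ z) (h1 : z < 1) :
    ∫ θ in (0:ℝ)..(π/2), z * Real.sin θ / (1 - z^2 * Real.sin θ ^ 2)
      = Real.arcsin z / Real.sqrt (1 - z^2) := by
  have hz2 : z^2 < 1 := by nlinarith
  have hw0 : 0 < 1 - z^2 := by linarith
  set w := Real.sqrt (1 - z^2) with hw
  have hwpos : 0 < w := Real.sqrt_pos.mpr hw0
  have hwsq : w^2 = 1 - z^2 := Real.sq_sqrt hw0.le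
  have hden : ∀ θ : ℝ, 0 < 1 - z^2 * Real.sin θ ^ 2 := by
    intro θ
    nlinarith [Real.sin_sq_le_one θ, sq_nonneg z, sq_nonneg (Real.sin θ), sq_nonneg (z * Real.sin θ)]
  have hderiv : ∀ θ ∈ Set.uIcc (0:ℝ) (π/2),
      HasDerivAt (fun t => -(1/w) * Real.arctan (z * Real.cos t / w))
        (z * Real.sin θ / (1 - z^2 * Real.sin θ ^ 2)) θ := by
    intro θ _
    have h1' : HasDerivAt (fun t => z * Real.cos t / w) (z * (-Real.sin θ) / w) θ := by
      exact (((Real.hasDerivAt_cos θ).const_mul z).div_const w)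
    have h2' := (Real.hasDerivAt_arctan (z * Real.cos θ / w)).comp θ h1'
    have h3' := h2'.const_mul (-(1/w))
    have e1 : 1 + (z * Real.cos θ / w)^2 = (1 - z^2 * Real.sin θ ^ 2)/w^2 := by
      have hcs : Real.cos θ ^ 2 = 1 - Real.sin θ ^ 2 := Real.cos_sq' θ
      field_simp
      nlinarith [hcs, hwsq]
    refine h3'.congr_deriv ?_
    symm
    rw [e1]
    have hD : (1 - z^2 * Real.sin θ ^ 2) ≠ 0 := (hden θ).ne'
    field_simp
  have hcont : Continuous fun θ : ℝ => z * Real.sin θ / (1 - z^2 * Real.sin θ ^ 2) := by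
    apply Continuous.div (by continuity) (by continuity)
    intro θ; exact (hden θ).ne'
  have key := intervalIntegral.integral_eq_sub_of_hasDerivAt hderiv
    (hcont.intervalIntegrable 0 (π/2))
  rw [key]
  simp only [Real.cos_pi_div_two, Real.cos_zero, mul_zero, mul_one, zero_div, Real.arctan_zero]
  have harc : Real.arctan (z / w) = Real.arcsin z := by
    rw [Real.arctan_eq_arcsin]
    congr 1
    rw [div_pow, hwsq]
    have e2 : (1 : ℝ) + z^2 / (1 - z^2) = 1 / (1 - z^2) := by field_simp; ring
    rw [e2, one_div, Real.sqrt_inv, ← hw]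
    field_simp
  rw [harc]
  ring

lemma aux_sin_sq_int (A B : ℝ) (hA : 0 < A) (hB : 0 ≤ B) :
    ∫ ψ in (0:ℝ)..(π/2), 1 / (A + B * Real.sin ψ ^ 2)
      = π / (2 * Real.sqrt (A * (A + B))) := by
  have hAB : 0 < A + B := by linarith
  set m := Real.sqrt ((A + B) / A) with hm
  have hmpos : 0 < m := Real.sqrt_pos.mpr (by positivity)
  have hmsq : m ^ 2 = (A + B) / A := Real.sq_sqrt (by positivity)
  have hsqrt : Real.sqrt (A * (A + B)) = m * A := by
    have e : A * (A + B) = ((A + B) / A) * A ^ 2 := by field_simp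
    rw [e, Real.sqrt_mul (by positivity), Real.sqrt_sq hA.le]
  have hden : ∀ ψ : ℝ, 0 < A + B * Real.sin ψ ^ 2 := by
    intro ψ; nlinarith [sq_nonneg (Real.sin ψ)]
  have hcont : Continuous fun ψ : ℝ => 1 / (A + B * Real.sin ψ ^ 2) := by
    apply Continuous.div continuous_const (by continuity)
    intro ψ; exact (hden ψ).ne'
  set Φ : ℝ → ℝ := fun x => ∫ ψ in (0:ℝ)..x, 1 / (A + B * Real.sin ψ ^ 2) with hΦ
  have hΦcont : Continuous Φ :=
    intervalIntegral.continuous_primitive (fun a b => hcont.intervalIntegrable a b) 0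
  have hformula : ∀ x ∈ Ico (0:ℝ) (π/2), Φ x = Real.arctan (m * Real.tan x) / (m * A) := by
    intro x hx
    have hderiv : ∀ t ∈ Set.uIcc (0:ℝ) x,
        HasDerivAt (fun t => Real.arctan (m * Real.tan t) / (m * A))
          (1 / (A + B * Real.sin t ^ 2)) t := by
      intro t ht
      have htmem : t ∈ Set.Icc (0:ℝ) x := by
        rwa [Set.uIcc_of_le hx.1] at ht
      have hcos : 0 < Real.cos t := by
        apply Real.cos_pos_of_mem_Ioo
        constructor
        · linarith [htmem.1, Real.pi_pos]
        · exact lt_of_le_of_lt htmem.2 hx.2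
      have h1' : HasDerivAt (fun t => m * Real.tan t) (m * (1 / Real.cos t ^ 2)) t :=
        (Real.hasDerivAt_tan hcos.ne').const_mul m
      have h2' := ((Real.hasDerivAt_arctan (m * Real.tan t)).comp t h1').div_const (m * A)
      refine h2'.congr_deriv ?_
      symm
      have hsc : Real.sin t ^ 2 = 1 - Real.cos t ^ 2 := Real.sin_sq t
      have htan : Real.tan t = Real.sin t / Real.cos t := Real.tan_eq_sin_div_cos t
      rw [htan]
      have e1 : 1 + (m * (Real.sin t / Real.cos t)) ^ 2
          = (A + B * Real.sin t ^ 2) / (A * Real.cos t ^ 2) := by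
        rw [mul_pow, div_pow, hmsq]
        field_simp
        nlinarith [hsc]
      rw [e1]
      have h3 : (A + B * Real.sin t ^ 2) ≠ 0 := (hden t).ne'
      field_simp
    have key := intervalIntegral.integral_eq_sub_of_hasDerivAt hderiv
      (hcont.intervalIntegrable 0 x)
    show (∫ ψ in (0:ℝ)..x, 1 / (A + B * Real.sin ψ ^ 2)) = _
    rw [key]
    simp [Real.tan_zero]
  -- limits
  have hlim1 : Tendsto Φ (nhdsWithin (π/2) (Iio (π/2))) (nhds (Φ (π/2))) :=
    (hΦcont.tendsto (π/2)).mono_left nhdsWithin_le_nhds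
  have hlim2 : Tendsto (fun x => Real.arctan (m * Real.tan x) / (m * A))
      (nhdsWithin (π/2) (Iio (π/2))) (nhds ((π/2) / (m * A))) := by
    have h1' : Tendsto (fun x => m * Real.tan x) (nhdsWithin (π/2) (Iio (π/2))) atTop :=
      (Real.tendsto_tan_pi_div_two).const_mul_atTop hmpos
    have h2' : Tendsto Real.arctan atTop (nhds (π/2)) :=
      tendsto_nhds_of_tendsto_nhdsWithin Real.tendsto_arctan_atTop
    exact (h2'.comp h1').div_const (m * A)
  have heq : Φ =ᶠ[nhdsWithin (π/2) (Iio (π/2))]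
      (fun x => Real.arctan (m * Real.tan x) / (m * A)) := by
    filter_upwards [Ioo_mem_nhdsLT_of_mem (show (π/2) ∈ Ioc (0:ℝ) (π/2) from
      ⟨by positivity, le_refl _⟩)] with x hx
    exact hformula x ⟨hx.1.le, hx.2⟩
  have hkey : Φ (π/2) = π / 2 / (m * A) := tendsto_nhds_unique (hlim1.congr' heq) hlim2
  rw [hsqrt]
  show Φ (π/2) = _
  rw [hkey]
  ring

lemma aux_fubini {F : ℝ → ℝ → ℝ} (hF : Continuous (Function.uncurry F))
    (a b c d : ℝ) (hab : a ≤ b) (hcd : c ≤ d) :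
    ∫ x in a..b, ∫ y in c..d, F x y = ∫ y in c..d, ∫ x in a..b, F x y := by
  rw [intervalIntegral.integral_of_le hab, intervalIntegral.integral_of_le hcd]
  simp_rw [intervalIntegral.integral_of_le hcd, intervalIntegral.integral_of_le hab]
  apply MeasureTheory.integral_integral_swap
  rw [Measure.prod_restrict, ← Measure.volume_eq_prod]
  apply (hF.continuousOn.integrableOn_compact (isCompact_Icc.prod isCompact_Icc)).mono_set
  exact Set.prod_mono Set.Ioc_subset_Icc_self Set.Ioc_subset_Icc_self

noncomputable section

/-- the rotation number of the invariant curve with caustic `E_λ` as the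
average of the reflection angle against the invariant measure:
`∫₀^{π/2} arcsin(J·h(ψ))/(h(ψ)√(1−J²h(ψ)²)) dψ = (π/(2cf))·F(arcsin(√λ/b), 1/f)`,
where `h(ψ) = √(a² cos²ψ + b² sin²ψ)`. -/
theorem rotation_number_integral_identity
    (a b lam : ℝ) (hab : b < a) (hb : 0 < b) (hlam0 : 0 < lam) (hlam : lam < b^2)
    (c f J : ℝ) (hc : c = Real.sqrt (a^2 - b^2)) (hf : f = Real.sqrt (a^2 - lam) / c)
    (hJ : J = Real.sqrt lam / (a * b))
    (h : ℝ → ℝ)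
    (hh : ∀ ψ : ℝ, h ψ = Real.sqrt (a^2 * Real.cos ψ ^ 2 + b^2 * Real.sin ψ ^ 2)) :
    (∫ ψ in (0:ℝ)..(π/2),
        Real.arcsin (J * h ψ) / (h ψ * Real.sqrt (1 - J^2 * h ψ ^ 2))) =
      (π / (2 * c * f)) * ellF (Real.arcsin (Real.sqrt lam / b)) (1 / f) := by
  have ha : 0 < a := hb.trans hab
  have hab2 : 0 < a^2 - b^2 := by nlinarith
  have hcpos : 0 < c := by rw [hc]; exact Real.sqrt_pos.mpr hab2
  have hcsq : c^2 = a^2 - b^2 := by rw [hc]; exact Real.sq_sqrt hab2.le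
  have halam : 0 < a^2 - lam := by nlinarith
  have hblam : 0 < b^2 - lam := by linarith
  have hfpos : 0 < f := by
    rw [hf]; exact div_pos (Real.sqrt_pos.mpr halam) hcpos
  have hfsq : f^2 = (a^2 - lam) / c^2 := by
    rw [hf, div_pow, Real.sq_sqrt halam.le]
  have hf1 : 1 < f^2 := by
    rw [hfsq, lt_div_iff₀ (by positivity)]
    nlinarith [hcsq]
  have hJpos : 0 < J := by
    rw [hJ]; exact div_pos (Real.sqrt_pos.mpr hlam0) (by positivity)
  have hJsq : J^2 = lam / (a^2 * b^2) := by
    rw [hJ, div_pow, Real.sq_sqrt hlam0.le, mul_pow]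
  have hslam : Real.sqrt lam ^ 2 = lam := Real.sq_sqrt hlam0.le
  have hslb : Real.sqrt lam < b := by
    rw [show b = Real.sqrt (b^2) by rw [Real.sqrt_sq hb.le]]
    exact Real.sqrt_lt_sqrt hlam0.le hlam
  have hJab : J * (a * b) = Real.sqrt lam := by
    rw [hJ]; field_simp
  -- facts about h
  have hhsq : ∀ ψ : ℝ, h ψ ^ 2 = a^2 - (a^2 - b^2) * Real.sin ψ ^ 2 := by
    intro ψ
    rw [hh ψ, Real.sq_sqrt (by positivity), Real.cos_sq']
    ring
  have hhb2 : ∀ ψ : ℝ, b^2 ≤ h ψ ^ 2 := by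
    intro ψ; rw [hhsq ψ]; nlinarith [Real.sin_sq_le_one ψ]
  have hha2 : ∀ ψ : ℝ, h ψ ^ 2 ≤ a^2 := by
    intro ψ; rw [hhsq ψ]; nlinarith [sq_nonneg (Real.sin ψ)]
  have hhpos : ∀ ψ : ℝ, 0 < h ψ := by
    intro ψ
    rw [hh ψ]
    apply Real.sqrt_pos.mpr
    nlinarith [sq_nonneg (Real.cos ψ), sq_nonneg (Real.sin ψ), Real.sin_sq_add_cos_sq ψ]
  have hhb : ∀ ψ : ℝ, b ≤ h ψ := by
    intro ψ; nlinarith [hhb2 ψ, hhpos ψ]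
  have hha : ∀ ψ : ℝ, h ψ ≤ a := by
    intro ψ; nlinarith [hha2 ψ, hhpos ψ]
  have hJh1 : ∀ ψ : ℝ, J * h ψ < 1 := by
    intro ψ
    calc J * h ψ ≤ J * a := mul_le_mul_of_nonneg_left (hha ψ) hJpos.le
    _ = Real.sqrt lam / b := by rw [hJ]; field_simp
    _ < 1 := by rw [div_lt_one hb]; exact hslb
  have hJh0 : ∀ ψ : ℝ, 0 < J * h ψ := fun ψ => mul_pos hJpos (hhpos ψ)
  have hJa1 : J^2 * a^2 < 1 := by
    have h1 := hJh1 0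
    have h2 := hJh0 0
    nlinarith [hha 0, hhpos 0, mul_le_mul_of_nonneg_left (hha 0) hJpos.le]
  have hcont_h : Continuous h := by
    have : h = fun ψ => Real.sqrt (a^2 * Real.cos ψ ^ 2 + b^2 * Real.sin ψ ^ 2) :=
      funext hh
    rw [this]
    exact Real.continuous_sqrt.comp (by continuity)
  -- denominator bound (joint)
  have hdenom : ∀ ψ θ : ℝ, 1 - J^2 * a^2 * Real.sin θ ^ 2 ≤ 1 - J^2 * h ψ ^ 2 * Real.sin θ ^ 2 := by
    intro ψ θ
    have e := mul_le_mul_of_nonneg_left (hha2 ψ)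
      (show (0:ℝ) ≤ J^2 * Real.sin θ^2 by positivity)
    nlinarith [e]
  have hApos : ∀ θ : ℝ, 0 < 1 - J^2 * a^2 * Real.sin θ ^ 2 := by
    intro θ
    nlinarith [Real.sin_sq_le_one θ, sq_nonneg (Real.sin θ), hJa1, sq_nonneg (J*a)]
  -- the common value T
  set T : ℝ := ∫ v in (0:ℝ)..1,
      1 / (Real.sqrt (b^2 - lam + lam * v^2) * Real.sqrt (a^2 - lam + lam * v^2)) with hT
  have hG1 : ∀ v : ℝ, 0 < b^2 - lam + lam * v^2 := by
    intro v; nlinarith [sq_nonneg v]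
  have hG2 : ∀ v : ℝ, 0 < a^2 - lam + lam * v^2 := by
    intro v; nlinarith [sq_nonneg v]
  have hGcont : Continuous (fun v : ℝ =>
      1 / (Real.sqrt (b^2 - lam + lam * v^2) * Real.sqrt (a^2 - lam + lam * v^2))) := by
    apply Continuous.div continuous_const
    · exact (Real.continuous_sqrt.comp (by continuity)).mul
        (Real.continuous_sqrt.comp (by continuity))
    · intro v
      exact (mul_pos (Real.sqrt_pos.mpr (hG1 v)) (Real.sqrt_pos.mpr (hG2 v))).ne'
  have stepL : (∫ ψ in (0:ℝ)..(π/2),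
        Real.arcsin (J * h ψ) / (h ψ * Real.sqrt (1 - J^2 * h ψ ^ 2)))
      = π * Real.sqrt lam / 2 * T := by
    have hDpos : ∀ ψ θ : ℝ, 0 < 1 - J^2 * h ψ ^ 2 * Real.sin θ ^ 2 :=
      fun ψ θ => lt_of_lt_of_le (hApos θ) (hdenom ψ θ)
    -- (a) pointwise: integrand = inner integral
    have hpt : ∀ ψ : ℝ, Real.arcsin (J * h ψ) / (h ψ * Real.sqrt (1 - J^2 * h ψ ^ 2))
        = ∫ θ in (0:ℝ)..(π/2), J * Real.sin θ / (1 - J^2 * h ψ ^ 2 * Real.sin θ ^ 2) := by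
      intro ψ
      have harc := aux_arcsin_int (J * h ψ) (hJh0 ψ).le (hJh1 ψ)
      have e : ∀ θ : ℝ, J * Real.sin θ / (1 - J^2 * h ψ ^ 2 * Real.sin θ ^ 2)
          = (1 / h ψ) * ((J * h ψ) * Real.sin θ / (1 - (J * h ψ)^2 * Real.sin θ ^ 2)) := by
        intro θ
        rw [show ((J * h ψ)^2 : ℝ) = J^2 * h ψ ^ 2 by ring]
        have hD := (hDpos ψ θ).ne'
        field_simp [(hhpos ψ).ne']
      simp_rw [e]
      rw [intervalIntegral.integral_const_mul, harc]
      have hX : 0 < 1 - J^2 * h ψ ^ 2 := by nlinarith [hJh1 ψ, hJh0 ψ]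
      rw [show (1 : ℝ) - (J * h ψ)^2 = 1 - J^2 * h ψ ^ 2 by ring]
      have hsX : Real.sqrt (1 - J^2 * h ψ ^ 2) ≠ 0 := (Real.sqrt_pos.mpr hX).ne'
      field_simp
    simp_rw [hpt]
    -- (b) Fubini
    have hFc : Continuous (Function.uncurry fun ψ θ =>
        J * Real.sin θ / (1 - J^2 * h ψ ^ 2 * Real.sin θ ^ 2)) := by
      apply Continuous.div
      · exact continuous_const.mul (Real.continuous_sin.comp continuous_snd)
      · exact continuous_const.sub ((continuous_const.mul
          (((hcont_h.comp continuous_fst).pow 2))).mul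
          ((Real.continuous_sin.comp continuous_snd).pow 2))
      · intro p; exact (hDpos p.1 p.2).ne'
    rw [aux_fubini hFc 0 (π/2) 0 (π/2) (by positivity) (by positivity)]
    -- (c) inner ψ-integral
    have hinner : ∀ θ : ℝ,
        (∫ ψ in (0:ℝ)..(π/2), J * Real.sin θ / (1 - J^2 * h ψ ^ 2 * Real.sin θ ^ 2))
        = J * Real.sin θ * (π / (2 * Real.sqrt ((1 - J^2 * a^2 * Real.sin θ ^ 2)
            * (1 - J^2 * b^2 * Real.sin θ ^ 2)))) := by
      intro θ
      have hA : 0 < 1 - J^2 * a^2 * Real.sin θ ^ 2 := hApos θ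
      have hB : 0 ≤ J^2 * (a^2 - b^2) * Real.sin θ ^ 2 := by positivity
      have e : ∀ ψ : ℝ, J * Real.sin θ / (1 - J^2 * h ψ ^ 2 * Real.sin θ ^ 2)
          = J * Real.sin θ * (1 / ((1 - J^2 * a^2 * Real.sin θ ^ 2)
              + (J^2 * (a^2 - b^2) * Real.sin θ ^ 2) * Real.sin ψ ^ 2)) := by
        intro ψ
        rw [show (1 - J^2 * a^2 * Real.sin θ ^ 2)
              + (J^2 * (a^2 - b^2) * Real.sin θ ^ 2) * Real.sin ψ ^ 2
            = 1 - J^2 * h ψ ^ 2 * Real.sin θ ^ 2 by rw [hhsq ψ]; ring]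
        rw [mul_one_div]
      simp_rw [e]
      rw [intervalIntegral.integral_const_mul,
        aux_sin_sq_int _ _ hA hB]
      congr 3
      ring
    simp_rw [hinner]
    -- (d) rewrite with explicit sqrt factors
    have hptd : ∀ θ : ℝ, J * Real.sin θ * (π / (2 * Real.sqrt ((1 - J^2 * a^2 * Real.sin θ ^ 2)
            * (1 - J^2 * b^2 * Real.sin θ ^ 2))))
        = (π * Real.sqrt lam / 2) * (Real.sin θ *
            (1 / (Real.sqrt (b^2 - lam + lam * Real.cos θ ^ 2)
              * Real.sqrt (a^2 - lam + lam * Real.cos θ ^ 2)))) := by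
      intro θ
      have hP := hG1 (Real.cos θ)
      have hQ := hG2 (Real.cos θ)
      have hsP : 0 < Real.sqrt (b^2 - lam + lam * Real.cos θ ^ 2) := Real.sqrt_pos.mpr hP
      have hsQ : 0 < Real.sqrt (a^2 - lam + lam * Real.cos θ ^ 2) := Real.sqrt_pos.mpr hQ
      have e2 : (1 - J^2 * a^2 * Real.sin θ ^ 2) * (1 - J^2 * b^2 * Real.sin θ ^ 2)
          = (Real.sqrt (b^2 - lam + lam * Real.cos θ ^ 2)
              * Real.sqrt (a^2 - lam + lam * Real.cos θ ^ 2) / (a * b))^2 := by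
        rw [div_pow, mul_pow, Real.sq_sqrt hP.le, Real.sq_sqrt hQ.le, hJsq,
          Real.sin_sq θ]
        field_simp
        ring
      rw [e2, Real.sqrt_sq (by positivity), ← hJab]
      field_simp
    simp_rw [hptd]
    rw [intervalIntegral.integral_const_mul]
    congr 1
    -- (e) substitution v = cos θ
    have hsub := intervalIntegral.integral_comp_smul_deriv (a := 0) (b := π/2)
        (f := Real.cos) (f' := fun θ => -Real.sin θ)
        (g := fun v => 1 / (Real.sqrt (b^2 - lam + lam * v^2)
          * Real.sqrt (a^2 - lam + lam * v^2)))
        (fun θ _ => Real.hasDerivAt_cos θ) (Real.continuous_sin.neg.continuousOn) hGcont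
    simp only [Real.cos_zero, Real.cos_pi_div_two, smul_eq_mul, Function.comp] at hsub
    rw [intervalIntegral.integral_symm 0 1] at hsub
    simp only [neg_mul] at hsub
    rw [intervalIntegral.integral_neg] at hsub
    exact (neg_injective hsub).trans hT.symm
  have stepR : (π / (2 * c * f)) * ellF (Real.arcsin (Real.sqrt lam / b)) (1 / f)
      = π * Real.sqrt lam / 2 * T := by
    have hsbl : 0 < Real.sqrt (b^2 - lam) := Real.sqrt_pos.mpr hblam
    set q := Real.sqrt lam / Real.sqrt (b^2 - lam) with hq
    have hqpos : 0 < q := div_pos (Real.sqrt_pos.mpr hlam0) hsbl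
    have hq2 : q^2 = lam / (b^2 - lam) := by
      rw [hq, div_pow, Real.sq_sqrt hlam0.le, Real.sq_sqrt hblam.le]
    have hql : Real.sqrt lam = q * Real.sqrt (b^2 - lam) := by
      rw [hq]; field_simp
    have hphi0 : Real.arcsin (Real.sqrt lam / b) = Real.arctan q := by
      rw [Real.arctan_eq_arcsin]
      congr 1
      have e1 : 1 + q^2 = (b / Real.sqrt (b^2 - lam))^2 := by
        rw [hq2, div_pow, Real.sq_sqrt hblam.le]
        field_simp
        ring
      rw [e1, Real.sqrt_sq (by positivity), hq]
      field_simp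
    have hf2sin : ∀ t : ℝ, 0 < f^2 - Real.sin t ^ 2 := by
      intro t; nlinarith [Real.sin_sq_le_one t, hf1]
    have hint1 : ∀ t : ℝ, 1 / Real.sqrt (1 - (1/f)^2 * Real.sin t ^ 2)
        = f * (1 / Real.sqrt (f^2 - Real.sin t ^ 2)) := by
      intro t
      have e : 1 - (1/f)^2 * Real.sin t ^ 2 = (f^2 - Real.sin t ^ 2) * (f^2)⁻¹ := by
        field_simp
      rw [e, Real.sqrt_mul (hf2sin t).le, Real.sqrt_inv, Real.sqrt_sq (by positivity)]
      have hne : Real.sqrt (f^2 - Real.sin t ^ 2) ≠ 0 := (Real.sqrt_pos.mpr (hf2sin t)).ne'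
      field_simp
    have hellF : ellF (Real.arcsin (Real.sqrt lam / b)) (1/f)
        = f * ∫ t in (0:ℝ)..(Real.arctan q), 1 / Real.sqrt (f^2 - Real.sin t ^ 2) := by
      rw [ellF, hphi0]
      simp_rw [hint1]
      rw [intervalIntegral.integral_const_mul]
    have hgcont : Continuous (fun t : ℝ => 1 / Real.sqrt (f^2 - Real.sin t ^ 2)) := by
      apply Continuous.div continuous_const
        (Real.continuous_sqrt.comp (continuous_const.sub (Real.continuous_sin.pow 2)))
      intro t; exact (Real.sqrt_pos.mpr (hf2sin t)).ne'
    have hderiv : ∀ v ∈ Set.uIcc (0:ℝ) 1,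
        HasDerivAt (fun v : ℝ => Real.arctan (q * v)) (q / (1 + (q*v)^2)) v := by
      intro v _
      have h1 : HasDerivAt (fun v : ℝ => q * v) q v := by
        simpa using (hasDerivAt_id v).const_mul q
      have h2 := (Real.hasDerivAt_arctan (q * v)).comp v h1
      refine h2.congr_deriv ?_
      ring
    have hf'cont : ContinuousOn (fun v : ℝ => q / (1 + (q*v)^2)) (Set.uIcc (0:ℝ) 1) := by
      apply Continuous.continuousOn
      apply Continuous.div continuous_const
        (continuous_const.add ((continuous_const.mul continuous_id).pow 2))
      intro v; exact (by positivity : (0:ℝ) < 1 + (q*v)^2).ne'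
    have hsub := intervalIntegral.integral_comp_smul_deriv (a := (0:ℝ)) (b := 1)
        hderiv hf'cont hgcont
    simp only [mul_zero, mul_one, Real.arctan_zero, smul_eq_mul, Function.comp] at hsub
    have hptr : ∀ v : ℝ, q / (1 + (q*v)^2)
          * (1 / Real.sqrt (f^2 - Real.sin (Real.arctan (q*v)) ^ 2))
        = (c * Real.sqrt lam) * (1 / (Real.sqrt (b^2 - lam + lam * v^2)
            * Real.sqrt (a^2 - lam + lam * v^2))) := by
      intro v
      have hP := hG1 v
      have hQ := hG2 v
      set P := Real.sqrt (b^2 - lam + lam * v^2) with hPd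
      set Q := Real.sqrt (a^2 - lam + lam * v^2) with hQd
      set R := Real.sqrt (b^2 - lam) with hRd
      have hPpos : 0 < P := Real.sqrt_pos.mpr hP
      have hQpos : 0 < Q := Real.sqrt_pos.mpr hQ
      have hP2 : P^2 = b^2 - lam + lam * v^2 := Real.sq_sqrt hP.le
      have hQ2 : Q^2 = a^2 - lam + lam * v^2 := Real.sq_sqrt hQ.le
      have hR2 : R^2 = b^2 - lam := Real.sq_sqrt hblam.le
      have hX2 : Real.sin (Real.arctan (q*v)) ^ 2 = (q*v)^2 / (1 + (q*v)^2) := by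
        rw [Real.sin_arctan, div_pow, Real.sq_sqrt (by positivity)]
      have e4 : 1 + (q*v)^2 = P^2 / R^2 := by
        rw [hP2, hR2, mul_pow, hq2]
        field_simp
      have e3 : f^2 - Real.sin (Real.arctan (q*v)) ^ 2 = (R * Q / (c * P))^2 := by
        rw [hX2, e4, mul_pow, hq2, hfsq, div_pow, mul_pow, mul_pow, hQ2, hP2, hR2]
        have hPne : (b^2 - lam + lam * v^2) ≠ 0 := hP.ne'
        field_simp
        linear_combination (-(lam * v^2)) * hcsq
      rw [e3, Real.sqrt_sq (by positivity), hql, e4]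
      field_simp
    simp_rw [hptr] at hsub
    rw [intervalIntegral.integral_const_mul] at hsub
    rw [hellF, ← hsub, ← hT]
    field_simp
  rw [stepL, stepR]
end
end

section
/- Let A > 0 and define f(C) = ∫₀^π √(A + C cos t) dt for C ∈ [0, A). Then f is strictly decreasing on [0, A). -/
open Real intervalIntegral

noncomputable section

lemma sqrt_sum_le {A d₁ d₂ : ℝ} (h0 : 0 ≤ d₁) (h12 : d₁ ≤ d₂) (h2A : d₂ ≤ A) :
    Real.sqrt (A + d₂) + Real.sqrt (A - d₂) ≤ Real.sqrt (A + d₁) + Real.sqrt (A - d₁) := by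
  have hA : 0 ≤ A := le_trans (le_trans h0 h12) h2A
  have h1 : Real.sqrt (d₂ * d₂) ≤ Real.sqrt (d₂ * d₂) := le_refl _
  have hs2 : Real.sqrt ((A + d₂) * (A - d₂)) ≤ Real.sqrt ((A + d₁) * (A - d₁)) := by
    apply Real.sqrt_le_sqrt; nlinarith
  have e2 : Real.sqrt (A + d₂) * Real.sqrt (A - d₂) = Real.sqrt ((A + d₂) * (A - d₂)) :=
    (Real.sqrt_mul (by linarith) _).symm
  have e1 : Real.sqrt (A + d₁) * Real.sqrt (A - d₁) = Real.sqrt ((A + d₁) * (A - d₁)) :=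
    (Real.sqrt_mul (by linarith) _).symm
  have q2p : Real.sqrt (A + d₂) ^ 2 = A + d₂ := Real.sq_sqrt (by linarith)
  have q2m : Real.sqrt (A - d₂) ^ 2 = A - d₂ := Real.sq_sqrt (by linarith)
  have q1p : Real.sqrt (A + d₁) ^ 2 = A + d₁ := Real.sq_sqrt (by linarith)
  have q1m : Real.sqrt (A - d₁) ^ 2 = A - d₁ := Real.sq_sqrt (by linarith)
  have hsq : (Real.sqrt (A + d₂) + Real.sqrt (A - d₂)) ^ 2
      ≤ (Real.sqrt (A + d₁) + Real.sqrt (A - d₁)) ^ 2 := by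
    have := hs2
    nlinarith [e1, e2]
  have hnn : 0 ≤ Real.sqrt (A + d₂) + Real.sqrt (A - d₂) :=
    add_nonneg (Real.sqrt_nonneg _) (Real.sqrt_nonneg _)
  nlinarith [Real.sqrt_nonneg (A + d₁), Real.sqrt_nonneg (A - d₁)]

lemma sqrt_sum_lt {A d₁ d₂ : ℝ} (h0 : 0 ≤ d₁) (h12 : d₁ < d₂) (h2A : d₂ ≤ A) :
    Real.sqrt (A + d₂) + Real.sqrt (A - d₂) < Real.sqrt (A + d₁) + Real.sqrt (A - d₁) := by
  have hs2 : Real.sqrt ((A + d₂) * (A - d₂)) < Real.sqrt ((A + d₁) * (A - d₁)) := by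
    apply Real.sqrt_lt_sqrt (by nlinarith); nlinarith
  have e2 : Real.sqrt (A + d₂) * Real.sqrt (A - d₂) = Real.sqrt ((A + d₂) * (A - d₂)) :=
    (Real.sqrt_mul (by linarith) _).symm
  have e1 : Real.sqrt (A + d₁) * Real.sqrt (A - d₁) = Real.sqrt ((A + d₁) * (A - d₁)) :=
    (Real.sqrt_mul (by linarith) _).symm
  have q2p : Real.sqrt (A + d₂) ^ 2 = A + d₂ := Real.sq_sqrt (by linarith)
  have q2m : Real.sqrt (A - d₂) ^ 2 = A - d₂ := Real.sq_sqrt (by linarith)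
  have q1p : Real.sqrt (A + d₁) ^ 2 = A + d₁ := Real.sq_sqrt (by linarith)
  have q1m : Real.sqrt (A - d₁) ^ 2 = A - d₁ := Real.sq_sqrt (by linarith)
  have hsq : (Real.sqrt (A + d₂) + Real.sqrt (A - d₂)) ^ 2
      < (Real.sqrt (A + d₁) + Real.sqrt (A - d₁)) ^ 2 := by
    nlinarith [e1, e2]
  have hnn : 0 ≤ Real.sqrt (A + d₁) + Real.sqrt (A - d₁) :=
    add_nonneg (Real.sqrt_nonneg _) (Real.sqrt_nonneg _)
  exact lt_of_pow_lt_pow_left₀ 2 hnn hsq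

lemma split_integral (A C : ℝ) :
    (∫ t in (0:ℝ)..π, Real.sqrt (A + C * Real.cos t))
      = ∫ t in (0:ℝ)..(π/2),
          (Real.sqrt (A + C * Real.cos t) + Real.sqrt (A - C * Real.cos t)) := by
  have hc : ∀ a b : ℝ, IntervalIntegrable (fun t => Real.sqrt (A + C * Real.cos t))
      MeasureTheory.volume a b := fun a b =>
    (Continuous.sqrt (by continuity)).intervalIntegrable a b
  have hc' : ∀ a b : ℝ, IntervalIntegrable (fun t => Real.sqrt (A - C * Real.cos t))
      MeasureTheory.volume a b := fun a b =>
    (Continuous.sqrt (by continuity)).intervalIntegrable a b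
  have hsplit := intervalIntegral.integral_add_adjacent_intervals
    (hc 0 (π/2)) (hc (π/2) π)
  have hsub : (∫ t in (π/2)..π, Real.sqrt (A + C * Real.cos t))
      = ∫ t in (0:ℝ)..(π/2), Real.sqrt (A - C * Real.cos t) := by
    have := intervalIntegral.integral_comp_sub_left
      (fun t => Real.sqrt (A + C * Real.cos t)) π (a := 0) (b := π/2)
    rw [show π - π/2 = π/2 by ring, show π - (0:ℝ) = π by ring] at this
    rw [← this]
    congr 1
    ext t
    rw [Real.cos_pi_sub]
    ring_nf
  rw [← hsplit, hsub, intervalIntegral.integral_add (hc 0 (π/2)) (hc' 0 (π/2))]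

/-- for `A > 0`, the function `C ↦ ∫₀^π √(A + C cos t) dt` is strictly
decreasing on `[0, A)`. -/
theorem circumference_integral_strictAnti
    (A : ℝ) (hA : 0 < A) :
    StrictAntiOn (fun C : ℝ => ∫ t in (0:ℝ)..π, Real.sqrt (A + C * Real.cos t))
      (Set.Ico 0 A) := by
  intro C₁ hC₁ C₂ hC₂ h12
  simp only
  rw [split_integral A C₁, split_integral A C₂]
  have hπ : (0:ℝ) < π/2 := by positivity
  apply intervalIntegral.integral_lt_integral_of_continuousOn_of_le_of_exists_lt hπ
  · exact ((Continuous.sqrt (by continuity)).add (Continuous.sqrt (by continuity))).continuousOn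
  · exact ((Continuous.sqrt (by continuity)).add (Continuous.sqrt (by continuity))).continuousOn
  · intro t ht
    have hcos0 : 0 ≤ Real.cos t :=
      Real.cos_nonneg_of_mem_Icc ⟨by linarith [ht.1, hπ], ht.2⟩
    have hcos1 : Real.cos t ≤ 1 := Real.cos_le_one t
    exact sqrt_sum_le (mul_nonneg hC₁.1 hcos0)
      (by nlinarith [hC₁.1, le_of_lt h12])
      (by nlinarith [hC₂.2])
  · refine ⟨0, ⟨le_refl _, le_of_lt hπ⟩, ?_⟩
    simp only [Real.cos_zero, mul_one]
    exact sqrt_sum_lt hC₁.1 h12 (le_of_lt hC₂.2)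
end
end
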